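/- arXiv:1703.02919 — 7 statements merged into one kernel-verified Lean document; each statement's English description precedes it below -/
import Mathlib

section
/- Let X and Y be Banach spaces. Then every finite convex combination of slices of the closed unit ball of X ⊕_∞ Y is relatively weakly open in the closed unit ball if and only if both X and Y have this property (i.e., every finite convex combination of slices of their closed unit balls is relatively weakly open). -/
open scoped Pointwise

noncomputable section

/-- The slice `S(f, α)` of the closed unit ball of `Z`. -/
def ballSlice (Z : Type*) [NormedAddCommGroup Z] [NormedSpace ℝ Z]
    (f : StrongDual ℝ Z) (α : ℝ) : Set Z :=
  {z ∈ Metric.closedBall (0 : Z) 1 | 1 - α < f z}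

/-- `C` is a finite convex combination of slices of the closed unit ball of `Z`. -/
def IsCCS (Z : Type*) [NormedAddCommGroup Z] [NormedSpace ℝ Z] (C : Set Z) : Prop :=
  ∃ (n : ℕ) (f : Fin n → StrongDual ℝ Z) (α lam : Fin n → ℝ),
    0 < n ∧ (∀ i, ‖f i‖ = 1) ∧ (∀ i, 0 < α i) ∧ (∀ i, 0 ≤ lam i) ∧
    (∑ i, lam i) = 1 ∧ C = ∑ i, lam i • ballSlice Z (f i) (α i)

/-- `z` is an interior point of `C` in the relative weak topology of the closed
unit ball of `Z`: some basic weak neighbourhood of `z`, intersected with the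
closed unit ball, is contained in `C`. -/
def RelWeakInteriorPt (Z : Type*) [NormedAddCommGroup Z] [NormedSpace ℝ Z]
    (C : Set Z) (z : Z) : Prop :=
  ∃ (F : Finset (StrongDual ℝ Z)) (δ : ℝ), 0 < δ ∧
    {w ∈ Metric.closedBall (0 : Z) 1 | ∀ f ∈ F, |f w - f z| < δ} ⊆ C


/-- `C` is relatively weakly open in the closed unit ball of `Z`. -/
def RelWeaklyOpen (Z : Type*) [NormedAddCommGroup Z] [NormedSpace ℝ Z] (C : Set Z) : Prop :=
  ∀ z ∈ C, RelWeakInteriorPt Z C z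

/-- (P1): every finite convex combination of slices of the closed unit ball of `Z`
is relatively weakly open in the closed unit ball. -/
def PropP1 (Z : Type*) [NormedAddCommGroup Z] [NormedSpace ℝ Z] : Prop :=
  ∀ C : Set Z, IsCCS Z C → RelWeaklyOpen Z C

/-- (P2): every finite convex combination of slices of the closed unit ball of `Z`
has nonempty interior in the relative weak topology of the closed unit ball. -/
def PropP2 (Z : Type*) [NormedAddCommGroup Z] [NormedSpace ℝ Z] : Prop :=
  ∀ C : Set Z, IsCCS Z C → ∃ z ∈ C, RelWeakInteriorPt Z C z

/-- (P3): every finite convex combination of slices of the closed unit ball of `Z`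
intersects the unit sphere of `Z`. -/
def PropP3 (Z : Type*) [NormedAddCommGroup Z] [NormedSpace ℝ Z] : Prop :=
  ∀ C : Set Z, IsCCS Z C → ∃ z ∈ C, ‖z‖ = 1

namespace CCSAux

lemma mem_combo_iff {Z : Type*} [NormedAddCommGroup Z] [NormedSpace ℝ Z] {n : ℕ}
    (lam : Fin n → ℝ) (S : Fin n → Set Z) (z : Z) :
    z ∈ ∑ i, lam i • S i ↔ ∃ w : Fin n → Z, (∀ i, w i ∈ S i) ∧ ∑ i, lam i • w i = z := by
  rw [Set.mem_fintype_sum]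
  constructor
  · rintro ⟨g, hg, rfl⟩
    choose w hw hw2 using fun i => Set.mem_smul_set.1 (hg i)
    exact ⟨w, hw, Finset.sum_congr rfl fun i _ => hw2 i⟩
  · rintro ⟨w, hw, rfl⟩
    exact ⟨fun i => lam i • w i, fun i => Set.smul_mem_smul_set (hw i), rfl⟩

/-- Key lemma: under `PropP1`, any convex combination of generalized slices
`{u ∈ B | p i (xs i) - ε i < p i u}` has the point `∑ lam i • xs i` as a
relative weak interior point. -/
lemma relWeakInteriorPt_combo {X : Type*} [NormedAddCommGroup X] [NormedSpace ℝ X]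
    (hX : PropP1 X) {n : ℕ} (hn : 0 < n)
    (lam : Fin n → ℝ) (hlam0 : ∀ i, 0 ≤ lam i) (hlam1 : ∑ i, lam i = 1)
    (p : Fin n → StrongDual ℝ X) (xs : Fin n → X) (hxs : ∀ i, ‖xs i‖ ≤ 1)
    (ε : Fin n → ℝ) (hε : ∀ i, 0 < ε i) :
    RelWeakInteriorPt X
      (∑ i, lam i • {u ∈ Metric.closedBall (0:X) 1 | p i (xs i) - ε i < p i u})
      (∑ i, lam i • xs i) := by
  have hmem : (∑ i, lam i • xs i) ∈
      ∑ i, lam i • {u ∈ Metric.closedBall (0:X) 1 | p i (xs i) - ε i < p i u} :=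
    (mem_combo_iff _ _ _).2
      ⟨xs, fun i => ⟨mem_closedBall_zero_iff.2 (hxs i), by linarith [hε i]⟩, rfl⟩
  rcases subsingleton_or_nontrivial X with hS | hN
  · refine ⟨∅, 1, one_pos, fun w hw => ?_⟩
    have : w = ∑ i, lam i • xs i := Subsingleton.elim _ _
    rw [this]; exact hmem
  · classical
    obtain ⟨x₀, hx₀⟩ := exists_ne (0 : X)
    obtain ⟨h₀, hh₀norm, -⟩ := exists_dual_vector ℝ x₀ (norm_ne_zero_iff.2 hx₀)
    set h : Fin n → StrongDual ℝ X :=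
      fun i => if p i = 0 then h₀ else ‖p i‖⁻¹ • p i with hh_def
    set β : Fin n → ℝ :=
      fun i => if p i = 0 then 3 else 1 - ‖p i‖⁻¹ * (p i (xs i) - ε i) with hβ_def
    have hset : ∀ i, ballSlice X (h i) (β i)
        = {u ∈ Metric.closedBall (0:X) 1 | p i (xs i) - ε i < p i u} := by
      intro i
      by_cases hp : p i = 0
      · ext u
        simp only [ballSlice, Set.mem_setOf_eq, hh_def, hβ_def, if_pos hp, hp,
          ContinuousLinearMap.zero_apply]
        constructor
        · rintro ⟨hu, -⟩; exact ⟨hu, by linarith [hε i]⟩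
        · rintro ⟨hu, -⟩
          refine ⟨hu, ?_⟩
          have h1 : ‖u‖ ≤ 1 := mem_closedBall_zero_iff.1 hu
          have h2 : ‖h₀ u‖ ≤ ‖h₀‖ * ‖u‖ := (h₀).le_opNorm u
          rw [hh₀norm, one_mul] at h2
          have h3 : |h₀ u| ≤ 1 := le_trans (by rw [← Real.norm_eq_abs]; exact h2) h1
          have := neg_le_of_abs_le h3
          linarith
      · have hpos : (0:ℝ) < ‖p i‖ := norm_pos_iff.2 hp
        have hipos : (0:ℝ) < ‖p i‖⁻¹ := inv_pos.2 hpos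
        ext u
        simp only [ballSlice, Set.mem_setOf_eq, hh_def, hβ_def, if_neg hp,
          ContinuousLinearMap.smul_apply, smul_eq_mul, sub_sub_cancel]
        constructor
        · rintro ⟨hu, hlt⟩; exact ⟨hu, (mul_lt_mul_iff_right₀ hipos).1 hlt⟩
        · rintro ⟨hu, hlt⟩; exact ⟨hu, (mul_lt_mul_iff_right₀ hipos).2 hlt⟩
    have hnorm : ∀ i, ‖h i‖ = 1 := by
      intro i
      by_cases hp : p i = 0
      · simp only [hh_def, if_pos hp]; exact hh₀norm
      · have hpos : (0:ℝ) < ‖p i‖ := norm_pos_iff.2 hp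
        simp only [hh_def, if_neg hp]
        rw [norm_smul, Real.norm_eq_abs, abs_of_pos (inv_pos.2 hpos),
          inv_mul_cancel₀ hpos.ne']
    have hβpos : ∀ i, 0 < β i := by
      intro i
      by_cases hp : p i = 0
      · simp only [hβ_def, if_pos hp]; norm_num
      · have hpos : (0:ℝ) < ‖p i‖ := norm_pos_iff.2 hp
        have h1 : p i (xs i) ≤ ‖p i‖ := by
          have h2 : ‖p i (xs i)‖ ≤ ‖p i‖ * ‖xs i‖ := (p i).le_opNorm _
          have h3 : p i (xs i) ≤ ‖p i (xs i)‖ := le_abs_self _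
          nlinarith [hxs i, norm_nonneg (p i (xs i))]
        simp only [hβ_def, if_neg hp, sub_pos]
        calc ‖p i‖⁻¹ * (p i (xs i) - ε i) < ‖p i‖⁻¹ * ‖p i‖ :=
              (mul_lt_mul_iff_right₀ (inv_pos.2 hpos)).2 (by linarith [hε i])
          _ = 1 := inv_mul_cancel₀ hpos.ne'
    have hCCS : IsCCS X (∑ i, lam i • ballSlice X (h i) (β i)) :=
      ⟨n, h, β, lam, hn, hnorm, hβpos, hlam0, hlam1, rfl⟩
    have hEq : (∑ i, lam i • ballSlice X (h i) (β i))
        = ∑ i, lam i • {u ∈ Metric.closedBall (0:X) 1 | p i (xs i) - ε i < p i u} :=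
      Finset.sum_congr rfl fun i _ => by rw [hset i]
    rw [← hEq] at hmem ⊢
    exact hX _ hCCS _ hmem

/-- Transfer of `PropP1` along a pair of maps realizing `W` as a 1-complemented
subspace of `Z`. -/
lemma propP1_of_pair {Z W : Type*} [NormedAddCommGroup Z] [NormedSpace ℝ Z]
    [NormedAddCommGroup W] [NormedSpace ℝ W]
    (hZ : PropP1 Z) (J : W →L[ℝ] Z) (P : Z →L[ℝ] W)
    (hPJ : ∀ w, P (J w) = w) (hJ : ∀ w, ‖J w‖ = ‖w‖) (hP : ∀ z, ‖P z‖ ≤ ‖z‖) :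
    PropP1 W := by
  classical
  rintro C ⟨n, f, α, lam, hn, hf, hα, hlam0, hlam1, rfl⟩ z hz
  set F : Fin n → StrongDual ℝ Z := fun i => (f i).comp P with hF_def
  have hJnorm : ‖J‖ ≤ 1 :=
    ContinuousLinearMap.opNorm_le_bound _ zero_le_one fun w => by rw [hJ, one_mul]
  have hFnorm : ∀ i, ‖F i‖ = 1 := by
    intro i
    refine le_antisymm (ContinuousLinearMap.opNorm_le_bound _ zero_le_one fun v => ?_) ?_
    · calc ‖(F i) v‖ = ‖f i (P v)‖ := rfl
        _ ≤ ‖f i‖ * ‖P v‖ := (f i).le_opNorm _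
        _ = ‖P v‖ := by rw [hf i, one_mul]
        _ ≤ ‖v‖ := hP v
        _ = 1 * ‖v‖ := (one_mul _).symm
    · have hfe : f i = (F i).comp J := by
        ext w; simp [hF_def, hPJ w]
      calc (1:ℝ) = ‖f i‖ := (hf i).symm
        _ = ‖(F i).comp J‖ := by rw [← hfe]
        _ ≤ ‖F i‖ * ‖J‖ := ContinuousLinearMap.opNorm_comp_le _ _
        _ ≤ ‖F i‖ * 1 := mul_le_mul_of_nonneg_left hJnorm (norm_nonneg _)
        _ = ‖F i‖ := mul_one _
  have hCZ : IsCCS Z (∑ i, lam i • ballSlice Z (F i) (α i)) :=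
    ⟨n, F, α, lam, hn, hFnorm, hα, hlam0, hlam1, rfl⟩
  obtain ⟨w, hw, hwsum⟩ := (mem_combo_iff _ _ _).1 hz
  have hJz : J z ∈ ∑ i, lam i • ballSlice Z (F i) (α i) := by
    refine (mem_combo_iff _ _ _).2 ⟨fun i => J (w i), fun i => ?_, ?_⟩
    · obtain ⟨hw1, hw2⟩ := hw i
      refine ⟨mem_closedBall_zero_iff.2 ?_, ?_⟩
      · rw [hJ]; exact mem_closedBall_zero_iff.1 hw1
      · show 1 - α i < F i (J (w i))
        rw [hF_def]; show 1 - α i < f i (P (J (w i))); rw [hPJ]; exact hw2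
    · rw [← hwsum]; simp [map_sum, map_smul]
  obtain ⟨G, δ, hδ, hsub⟩ := hZ _ hCZ _ hJz
  refine ⟨G.image (fun φ => φ.comp J), δ, hδ, fun u hu => ?_⟩
  obtain ⟨hu1, hu2⟩ := hu
  have hJu : J u ∈ ∑ i, lam i • ballSlice Z (F i) (α i) := by
    refine hsub ⟨mem_closedBall_zero_iff.2
      (by rw [hJ]; exact mem_closedBall_zero_iff.1 hu1), fun φ hφ => ?_⟩
    have := hu2 (φ.comp J) (Finset.mem_image_of_mem _ hφ)
    simpa using this
  obtain ⟨v, hv, hvsum⟩ := (mem_combo_iff _ _ _).1 hJu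
  refine (mem_combo_iff _ _ _).2 ⟨fun i => P (v i), fun i => ?_, ?_⟩
  · obtain ⟨hv1, hv2⟩ := hv i
    refine ⟨mem_closedBall_zero_iff.2 ((hP _).trans (mem_closedBall_zero_iff.1 hv1)), ?_⟩
    show 1 - α i < f i (P (v i))
    have : 1 - α i < F i (v i) := hv2
    rwa [hF_def] at this
  · have h1 := congrArg P hvsum
    rw [hPJ] at h1
    rw [← h1]; simp [map_sum, map_smul]

end CCSAux

namespace CCSAux

variable {X Y : Type*} [NormedAddCommGroup X] [NormedSpace ℝ X]
  [NormedAddCommGroup Y] [NormedSpace ℝ Y]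

def fstL : WithLp ⊤ (X × Y) →L[ℝ] X := (ContinuousLinearMap.fst ℝ X Y).comp
  (WithLp.prodContinuousLinearEquiv ⊤ ℝ X Y).toContinuousLinearMap
def sndL : WithLp ⊤ (X × Y) →L[ℝ] Y := (ContinuousLinearMap.snd ℝ X Y).comp
  (WithLp.prodContinuousLinearEquiv ⊤ ℝ X Y).toContinuousLinearMap
def inlL : X →L[ℝ] WithLp ⊤ (X × Y) :=
  ((WithLp.prodContinuousLinearEquiv ⊤ ℝ X Y).symm.toContinuousLinearMap).comp
    (ContinuousLinearMap.inl ℝ X Y)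
def inrL : Y →L[ℝ] WithLp ⊤ (X × Y) :=
  ((WithLp.prodContinuousLinearEquiv ⊤ ℝ X Y).symm.toContinuousLinearMap).comp
    (ContinuousLinearMap.inr ℝ X Y)

lemma norm_fstL_le (z : WithLp ⊤ (X × Y)) : ‖fstL z‖ ≤ ‖z‖ := by
  rw [WithLp.prod_norm_eq_sup]; exact le_sup_left
lemma norm_sndL_le (z : WithLp ⊤ (X × Y)) : ‖sndL z‖ ≤ ‖z‖ := by
  rw [WithLp.prod_norm_eq_sup]; exact le_sup_right
lemma norm_inlL (x : X) : ‖inlL (Y := Y) x‖ = ‖x‖ := by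
  rw [WithLp.prod_norm_eq_sup]; show ‖x‖ ⊔ ‖(0:Y)‖ = ‖x‖; simp
lemma norm_inrL (y : Y) : ‖inrL (X := X) y‖ = ‖y‖ := by
  rw [WithLp.prod_norm_eq_sup]; show ‖(0:X)‖ ⊔ ‖y‖ = ‖y‖; simp
lemma norm_inl_add_inr (x : X) (y : Y) : ‖inlL x + inrL y‖ = ‖x‖ ⊔ ‖y‖ := by
  rw [WithLp.prod_norm_eq_sup]; show ‖x + 0‖ ⊔ ‖0 + y‖ = _; simp
lemma dec_eq (w : WithLp ⊤ (X × Y)) : inlL (fstL w) + inrL (sndL w) = w := by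
  show WithLp.toLp ⊤ ((w.fst + 0, 0 + w.snd) : X × Y) = w
  simp
  rfl

end CCSAux

open CCSAux

/-- Every finite convex combination of slices of the closed unit
ball of `X ⊕_∞ Y` is relatively weakly open if and only if both `X` and `Y` have
this property. -/
theorem propP1_infty_sum_iff
    {X Y : Type*} [NormedAddCommGroup X] [NormedSpace ℝ X] [CompleteSpace X]
    [NormedAddCommGroup Y] [NormedSpace ℝ Y] [CompleteSpace Y] :
    PropP1 (WithLp ⊤ (X × Y)) ↔ PropP1 X ∧ PropP1 Y := by
  classical
  constructor
  · intro hZ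
    exact ⟨propP1_of_pair hZ inlL fstL (fun w => rfl) norm_inlL norm_fstL_le,
      propP1_of_pair hZ inrL sndL (fun w => rfl) norm_inrL norm_sndL_le⟩
  · rintro ⟨hX, hY⟩ C ⟨n, F, α, lam, hn, hF, hα, hlam0, hlam1, rfl⟩ z hz
    obtain ⟨zs, hzs, hzsum⟩ := (mem_combo_iff _ _ _).1 hz
    set p : Fin n → StrongDual ℝ X := fun i => (F i).comp inlL with hp_def
    set q : Fin n → StrongDual ℝ Y := fun i => (F i).comp inrL with hq_def
    have hFdec : ∀ i (w : WithLp ⊤ (X × Y)), F i w = p i (fstL w) + q i (sndL w) := by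
      intro i w
      conv_lhs => rw [← dec_eq w]
      rw [map_add]; rfl
    set ε : Fin n → ℝ := fun i => (F i (zs i) - (1 - α i)) / 2 with hε_def
    have hεpos : ∀ i, 0 < ε i := by
      intro i
      have h2 : 1 - α i < F i (zs i) := (hzs i).2
      simp only [hε_def]; linarith
    have hzs1 : ∀ i, ‖zs i‖ ≤ 1 := fun i => mem_closedBall_zero_iff.1 (hzs i).1
    have hxs1 : ∀ i, ‖fstL (zs i)‖ ≤ 1 := fun i => (norm_fstL_le _).trans (hzs1 i)
    have hys1 : ∀ i, ‖sndL (zs i)‖ ≤ 1 := fun i => (norm_sndL_le _).trans (hzs1 i)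
    obtain ⟨Gx, δx, hδx, hsubx⟩ :=
      relWeakInteriorPt_combo hX hn lam hlam0 hlam1 p (fun i => fstL (zs i)) hxs1 ε hεpos
    obtain ⟨Gy, δy, hδy, hsuby⟩ :=
      relWeakInteriorPt_combo hY hn lam hlam0 hlam1 q (fun i => sndL (zs i)) hys1 ε hεpos
    have hfz : (∑ i, lam i • fstL (zs i)) = fstL z := by
      rw [← hzsum]; simp [map_sum, map_smul]
    have hgz : (∑ i, lam i • sndL (zs i)) = sndL z := by
      rw [← hzsum]; simp [map_sum, map_smul]
    refine ⟨(Gx.image (fun φ => φ.comp fstL)) ∪ (Gy.image (fun φ => φ.comp sndL)),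
      min δx δy, lt_min hδx hδy, fun w hw => ?_⟩
    obtain ⟨hw1, hw2⟩ := hw
    have hwx : fstL w ∈
        ∑ i, lam i • {u ∈ Metric.closedBall (0:X) 1 | p i (fstL (zs i)) - ε i < p i u} := by
      refine hsubx ⟨mem_closedBall_zero_iff.2
        ((norm_fstL_le _).trans (mem_closedBall_zero_iff.1 hw1)), fun φ hφ => ?_⟩
      have h1 := hw2 (φ.comp fstL) (Finset.mem_union_left _ (Finset.mem_image_of_mem _ hφ))
      rw [hfz]
      calc |φ (fstL w) - φ (fstL z)| = |(φ.comp fstL) w - (φ.comp fstL) z| := rfl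
        _ < min δx δy := h1
        _ ≤ δx := min_le_left _ _
    have hwy : sndL w ∈
        ∑ i, lam i • {u ∈ Metric.closedBall (0:Y) 1 | q i (sndL (zs i)) - ε i < q i u} := by
      refine hsuby ⟨mem_closedBall_zero_iff.2
        ((norm_sndL_le _).trans (mem_closedBall_zero_iff.1 hw1)), fun φ hφ => ?_⟩
      have h1 := hw2 (φ.comp sndL) (Finset.mem_union_right _ (Finset.mem_image_of_mem _ hφ))
      rw [hgz]
      calc |φ (sndL w) - φ (sndL z)| = |(φ.comp sndL) w - (φ.comp sndL) z| := rfl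
        _ < min δx δy := h1
        _ ≤ δy := min_le_right _ _
    obtain ⟨us, hus, husum⟩ := (mem_combo_iff _ _ _).1 hwx
    obtain ⟨vs, hvs, hvsum⟩ := (mem_combo_iff _ _ _).1 hwy
    refine (mem_combo_iff _ _ _).2 ⟨fun i => inlL (us i) + inrL (vs i), fun i => ?_, ?_⟩
    · refine ⟨mem_closedBall_zero_iff.2 ?_, ?_⟩
      · rw [norm_inl_add_inr]
        exact sup_le (mem_closedBall_zero_iff.1 (hus i).1) (mem_closedBall_zero_iff.1 (hvs i).1)
      · show 1 - α i < F i (inlL (us i) + inrL (vs i))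
        have h1 : p i (fstL (zs i)) - ε i < p i (us i) := (hus i).2
        have h2 : q i (sndL (zs i)) - ε i < q i (vs i) := (hvs i).2
        have h3 : F i (zs i) = p i (fstL (zs i)) + q i (sndL (zs i)) := hFdec i (zs i)
        have h4 : F i (inlL (us i) + inrL (vs i)) = p i (us i) + q i (vs i) := by
          rw [map_add]; rfl
        have h5 : F i (zs i) - 2 * ε i = 1 - α i := by
          simp only [hε_def]; ring
        rw [h4]
        linarith
    · rw [← dec_eq w, ← husum, ← hvsum]
      simp only [map_sum, map_smul]
      rw [← Finset.sum_add_distrib]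
      exact Finset.sum_congr rfl fun i _ => by rw [smul_add]
end
end

section
/- Let X and Y be Banach spaces. If every finite convex combination of slices of the closed unit ball of X is relatively weakly open in B_X, and likewise for Y, then for any slices S₁^X,…,Sₙ^X of B_X, slices S₁^Y,…,Sₙ^Y of B_Y, and λᵢ ≥ 0 with Σλᵢ = 1, the set Σᵢ λᵢ (Sᵢ^X × Sᵢ^Y) is relatively weakly open in the closed unit ball of X ⊕_∞ Y. -/
open scoped Pointwise

noncomputable section

section Aux

variable {X Y : Type*}

/-- The "product" of `A : Set X` and `B : Set Y` inside `WithLp ⊤ (X × Y)`. -/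
def psetAux (A : Set X) (B : Set Y) : Set (WithLp ⊤ (X × Y)) :=
  {w | (WithLp.equiv ⊤ (X × Y) w).1 ∈ A ∧ (WithLp.equiv ⊤ (X × Y) w).2 ∈ B}

variable [AddCommGroup X] [AddCommGroup Y] [Module ℝ X] [Module ℝ Y]

lemma psetAux_zero : psetAux (0 : Set X) (0 : Set Y) = 0 := by
  ext w
  simp only [psetAux, Set.mem_setOf_eq, Set.mem_zero]
  constructor
  · rintro ⟨h1, h2⟩
    apply (WithLp.equiv ⊤ (X × Y)).injective
    rw [(show WithLp.equiv ⊤ (X × Y) 0 = 0 from rfl)]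
    exact Prod.ext h1 h2
  · rintro rfl
    simp [WithLp.equiv_apply, Prod.fst_zero, Prod.snd_zero]

lemma psetAux_add (A C : Set X) (B D : Set Y) :
    psetAux A B + psetAux C D = psetAux (A + C) (B + D) := by
  ext w
  constructor
  · rintro ⟨u, hu, v, hv, rfl⟩
    exact ⟨⟨_, hu.1, _, hv.1, by rw [(show ∀ u v : WithLp ⊤ (X × Y), WithLp.equiv ⊤ (X × Y) (u + v) = WithLp.equiv ⊤ (X × Y) u + WithLp.equiv ⊤ (X × Y) v from fun _ _ => rfl)]; rfl⟩,
           ⟨_, hu.2, _, hv.2, by rw [(show ∀ u v : WithLp ⊤ (X × Y), WithLp.equiv ⊤ (X × Y) (u + v) = WithLp.equiv ⊤ (X × Y) u + WithLp.equiv ⊤ (X × Y) v from fun _ _ => rfl)]; rfl⟩⟩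
  · rintro ⟨⟨a, ha, c, hc, h1⟩, ⟨b, hb, d, hd, h2⟩⟩
    refine ⟨(WithLp.equiv ⊤ (X × Y)).symm (a, b), ?_,
            (WithLp.equiv ⊤ (X × Y)).symm (c, d), ?_, ?_⟩
    · constructor <;> simp [psetAux, ha, hb]
    · constructor <;> simp [psetAux, hc, hd]
    · apply (WithLp.equiv ⊤ (X × Y)).injective
      rw [(show ∀ u v : WithLp ⊤ (X × Y), WithLp.equiv ⊤ (X × Y) (u + v) = WithLp.equiv ⊤ (X × Y) u + WithLp.equiv ⊤ (X × Y) v from fun _ _ => rfl)]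
      simp only [Equiv.apply_symm_apply]
      exact Prod.ext (by simpa using h1) (by simpa using h2)

lemma psetAux_smul (r : ℝ) (A : Set X) (B : Set Y) :
    r • psetAux A B = psetAux (r • A) (r • B) := by
  ext w
  constructor
  · rintro ⟨u, hu, rfl⟩
    exact ⟨⟨_, hu.1, by rw [(show ∀ (r : ℝ) (u : WithLp ⊤ (X × Y)), WithLp.equiv ⊤ (X × Y) (r • u) = r • WithLp.equiv ⊤ (X × Y) u from fun _ _ => rfl)]; rfl⟩, ⟨_, hu.2, by rw [(show ∀ (r : ℝ) (u : WithLp ⊤ (X × Y)), WithLp.equiv ⊤ (X × Y) (r • u) = r • WithLp.equiv ⊤ (X × Y) u from fun _ _ => rfl)]; rfl⟩⟩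
  · rintro ⟨⟨a, ha, h1⟩, ⟨b, hb, h2⟩⟩
    refine ⟨(WithLp.equiv ⊤ (X × Y)).symm (a, b), ⟨by simpa [psetAux] using ha,
      by simpa [psetAux] using hb⟩, ?_⟩
    apply (WithLp.equiv ⊤ (X × Y)).injective
    rw [(show ∀ (r : ℝ) (u : WithLp ⊤ (X × Y)), WithLp.equiv ⊤ (X × Y) (r • u) = r • WithLp.equiv ⊤ (X × Y) u from fun _ _ => rfl)]
    simp only [Equiv.apply_symm_apply]
    exact Prod.ext (by simpa using h1) (by simpa using h2)

lemma psetAux_sum {ι : Type*} (s : Finset ι) (lam : ι → ℝ) (A : ι → Set X) (B : ι → Set Y) :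
    (∑ i ∈ s, lam i • psetAux (A i) (B i)) =
      psetAux (∑ i ∈ s, lam i • A i) (∑ i ∈ s, lam i • B i) := by
  classical
  induction s using Finset.induction_on with
  | empty => simpa using psetAux_zero.symm
  | insert _ _ h ih =>
    rw [Finset.sum_insert h, Finset.sum_insert h, Finset.sum_insert h, ih,
      psetAux_smul, psetAux_add]

end Aux

/-- If `X` and `Y` both have the property that every finite convex
combination of slices of the closed unit ball is relatively weakly open, then for
slices `Sᵢˣ` of `B_X`, `Sᵢʸ` of `B_Y` and convex coefficients `λᵢ`, the set
`Σᵢ λᵢ (Sᵢˣ × Sᵢʸ)` is relatively weakly open in the closed unit ball of `X ⊕_∞ Y`. -/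
theorem sum_prod_slices_relWeaklyOpen_infty_sum
    {X Y : Type*} [NormedAddCommGroup X] [NormedSpace ℝ X] [CompleteSpace X]
    [NormedAddCommGroup Y] [NormedSpace ℝ Y] [CompleteSpace Y]
    (hX : PropP1 X) (hY : PropP1 Y)
    (n : ℕ) (hn : 0 < n)
    (fX : Fin n → StrongDual ℝ X) (hfX : ∀ i, ‖fX i‖ = 1)
    (αX : Fin n → ℝ) (hαX : ∀ i, 0 < αX i)
    (fY : Fin n → StrongDual ℝ Y) (hfY : ∀ i, ‖fY i‖ = 1)
    (αY : Fin n → ℝ) (hαY : ∀ i, 0 < αY i)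
    (lam : Fin n → ℝ) (hlam : ∀ i, 0 ≤ lam i) (hsum : (∑ i, lam i) = 1) :
    RelWeaklyOpen (WithLp ⊤ (X × Y))
      (∑ i, lam i • {w : WithLp ⊤ (X × Y) |
        (WithLp.equiv ⊤ (X × Y) w).1 ∈ ballSlice X (fX i) (αX i) ∧
        (WithLp.equiv ⊤ (X × Y) w).2 ∈ ballSlice Y (fY i) (αY i)}) := by
  classical
  show RelWeaklyOpen (WithLp ⊤ (X × Y))
    (∑ i, lam i • psetAux (ballSlice X (fX i) (αX i)) (ballSlice Y (fY i) (αY i)))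
  rw [psetAux_sum]
  set CX : Set X := ∑ i, lam i • ballSlice X (fX i) (αX i) with hCX
  set CY : Set Y := ∑ i, lam i • ballSlice Y (fY i) (αY i) with hCY
  intro z hz
  obtain ⟨FX, δX, hδX, hFXsub⟩ :=
    hX CX ⟨n, fX, αX, lam, hn, hfX, hαX, hlam, hsum, rfl⟩ _ hz.1
  obtain ⟨FY, δY, hδY, hFYsub⟩ :=
    hY CY ⟨n, fY, αY, lam, hn, hfY, hαY, hlam, hsum, rfl⟩ _ hz.2
  set πX : WithLp ⊤ (X × Y) →L[ℝ] X :=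
    (ContinuousLinearMap.fst ℝ X Y).comp
      (WithLp.prodContinuousLinearEquiv ⊤ ℝ X Y).toContinuousLinearMap with hπX
  set πY : WithLp ⊤ (X × Y) →L[ℝ] Y :=
    (ContinuousLinearMap.snd ℝ X Y).comp
      (WithLp.prodContinuousLinearEquiv ⊤ ℝ X Y).toContinuousLinearMap with hπY
  have hπXapp : ∀ w : WithLp ⊤ (X × Y), πX w = (WithLp.equiv ⊤ (X × Y) w).1 := fun w => rfl
  have hπYapp : ∀ w : WithLp ⊤ (X × Y), πY w = (WithLp.equiv ⊤ (X × Y) w).2 := fun w => rfl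
  refine ⟨FX.image (fun f => f.comp πX) ∪ FY.image (fun f => f.comp πY),
    min δX δY, lt_min hδX hδY, ?_⟩
  rintro w ⟨hwball, hwF⟩
  have hwnorm : ‖w‖ ≤ 1 := by simpa using hwball
  have hnormw : ‖w‖ = ‖(WithLp.equiv ⊤ (X × Y) w).1‖ ⊔ ‖(WithLp.equiv ⊤ (X × Y) w).2‖ := rfl
  constructor
  · apply hFXsub
    refine ⟨?_, ?_⟩
    · simp only [Metric.mem_closedBall, dist_zero_right]
      exact le_trans (le_sup_left.trans hnormw.ge) hwnorm
    · intro f hf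
      have := hwF (f.comp πX) (Finset.mem_union_left _ (Finset.mem_image_of_mem _ hf))
      simp only [ContinuousLinearMap.coe_comp', Function.comp_apply,
        ContinuousLinearMap.comp_apply, hπXapp] at this
      exact lt_of_lt_of_le this (min_le_left _ _)
  · apply hFYsub
    refine ⟨?_, ?_⟩
    · simp only [Metric.mem_closedBall, dist_zero_right]
      exact le_trans (le_sup_right.trans hnormw.ge) hwnorm
    · intro f hf
      have := hwF (f.comp πY) (Finset.mem_union_right _ (Finset.mem_image_of_mem _ hf))
      simp only [ContinuousLinearMap.coe_comp', Function.comp_apply,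
        ContinuousLinearMap.comp_apply, hπYapp] at this
      exact lt_of_lt_of_le this (min_le_right _ _)
end
end

section
/- Let X and Y be Banach spaces. Then every finite convex combination of slices of the closed unit ball of X ⊕_∞ Y has nonempty interior in the relative weak topology of the closed unit ball if and only if both X and Y have the corresponding property. -/
open scoped Pointwise

noncomputable section

/-! ### Auxiliary material -/

section Aux

variable {E : Type*} [NormedAddCommGroup E] [NormedSpace ℝ E]

theorem CCSaux.mem_combo {n : ℕ} {lam : Fin n → ℝ} {S : Fin n → Set E} {z : E} :
    z ∈ ∑ i, lam i • S i ↔ ∃ c : Fin n → E, (∀ i, c i ∈ S i) ∧ ∑ i, lam i • c i = z := by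
  rw [Set.mem_fintype_sum]
  constructor
  · rintro ⟨g, hg, rfl⟩
    choose c hc hce using fun i => Set.mem_smul_set.1 (hg i)
    exact ⟨c, hc, by simp [hce]⟩
  · rintro ⟨c, hc, rfl⟩
    exact ⟨fun i => lam i • c i, fun i => Set.smul_mem_smul_set (hc i), rfl⟩

theorem CCSaux.combo_subset {n : ℕ} {lam : Fin n → ℝ} {S T : Fin n → Set E}
    (h : ∀ i, S i ⊆ T i) : (∑ i, lam i • S i) ⊆ ∑ i, lam i • T i := by
  intro z hz
  rw [CCSaux.mem_combo] at hz ⊢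
  obtain ⟨c, hc, rfl⟩ := hz
  exact ⟨c, fun i => h i (hc i), rfl⟩

theorem CCSaux.combo_subset_ball {n : ℕ} {lam : Fin n → ℝ} {S : Fin n → Set E}
    (hlam : ∀ i, 0 ≤ lam i) (hsum : ∑ i, lam i = 1)
    (hS : ∀ i, S i ⊆ Metric.closedBall (0 : E) 1) :
    (∑ i, lam i • S i) ⊆ Metric.closedBall (0 : E) 1 := by
  intro z hz
  rw [CCSaux.mem_combo] at hz
  obtain ⟨c, hc, rfl⟩ := hz
  rw [Metric.mem_closedBall, dist_zero_right]
  calc ‖∑ i, lam i • c i‖ ≤ ∑ i, ‖lam i • c i‖ := norm_sum_le _ _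
    _ ≤ ∑ i, lam i := by
        refine Finset.sum_le_sum fun i _ => ?_
        rw [norm_smul, Real.norm_eq_abs, abs_of_nonneg (hlam i)]
        have := hS i (hc i)
        rw [Metric.mem_closedBall, dist_zero_right] at this
        nlinarith [hlam i]
    _ = 1 := hsum

/-- the intermediate target sets used in the backward direction -/
def CCSaux.sideSet (g : StrongDual ℝ E) (α : ℝ) : Set E :=
  {x ∈ Metric.closedBall (0 : E) 1 |
    ‖g‖ * (1 - α / 2) ≤ g x ∧ (g = 0 ∨ ‖g‖ * (1 - α / 2) < g x)}

theorem CCSaux.side_lemma {n : ℕ} (hn : 0 < n) (g : Fin n → StrongDual ℝ E)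
    (α lam : Fin n → ℝ) (hα : ∀ i, 0 < α i) (hlam : ∀ i, 0 ≤ lam i)
    (hsum : ∑ i, lam i = 1) (hP : PropP2 E) :
    ∃ x₀ ∈ ∑ i, lam i • CCSaux.sideSet (g i) (α i),
      ∃ (F : Finset (StrongDual ℝ E)) (δ : ℝ), 0 < δ ∧
        {w ∈ Metric.closedBall (0 : E) 1 | ∀ φ ∈ F, |φ w - φ x₀| < δ} ⊆
          ∑ i, lam i • CCSaux.sideSet (g i) (α i) := by
  rcases subsingleton_or_nontrivial E with hE | hE
  · -- subsingleton case
    have hg0 : ∀ i, g i = 0 := fun i => Subsingleton.elim _ _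
    have hT : ∀ i, CCSaux.sideSet (g i) (α i) = Metric.closedBall (0 : E) 1 := by
      intro i
      ext x
      simp [CCSaux.sideSet, hg0 i]
    have hmem : ∀ w : E, w ∈ Metric.closedBall (0 : E) 1 →
        w ∈ ∑ i, lam i • CCSaux.sideSet (g i) (α i) := by
      intro w hw
      rw [CCSaux.mem_combo]
      refine ⟨fun _ => w, fun i => by rw [hT i]; exact hw, ?_⟩
      rw [← Finset.sum_smul, hsum, one_smul]
    refine ⟨0, hmem 0 (by simp), ∅, 1, one_pos, ?_⟩
    intro w hw
    have h0 : w = (0 : E) := Subsingleton.elim _ _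
    exact hmem w (by simp [h0])
  · -- nontrivial case
    classical
    obtain ⟨u, hu⟩ := exists_ne (0 : E)
    obtain ⟨gs, hgs, -⟩ := exists_dual_vector ℝ u (norm_ne_zero_iff.2 hu)
    set g' : Fin n → StrongDual ℝ E :=
      fun i => if g i = 0 then gs else ‖g i‖⁻¹ • g i with hg'
    have hnorm : ∀ i, ‖g' i‖ = 1 := by
      intro i
      by_cases h : g i = 0
      · simp [hg', h, hgs]
      · have : ‖g i‖ ≠ 0 := norm_ne_zero_iff.2 h
        simp [hg', h, norm_smul, abs_of_nonneg (inv_nonneg.2 (norm_nonneg _)),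
          inv_mul_cancel₀ this]
    have hsub : ∀ i, ballSlice E (g' i) (α i / 2) ⊆ CCSaux.sideSet (g i) (α i) := by
      intro i x hx
      obtain ⟨hx1, hx2⟩ := hx
      by_cases h : g i = 0
      · exact ⟨hx1, by simp [h], Or.inl h⟩
      · have hpos : 0 < ‖g i‖ := norm_pos_iff.2 h
        rw [hg'] at hx2
        simp only [h, if_false, ContinuousLinearMap.smul_apply, smul_eq_mul] at hx2
        have hx3 : ‖g i‖ * (1 - α i / 2) < ‖g i‖ * (‖g i‖⁻¹ * g i x) :=
          mul_lt_mul_of_pos_left hx2 hpos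
        rw [← mul_assoc, mul_inv_cancel₀ (ne_of_gt hpos), one_mul] at hx3
        exact ⟨hx1, le_of_lt hx3, Or.inr hx3⟩
    obtain ⟨x₀, hx₀, F, δ, hδ, hF⟩ :=
      hP (∑ i, lam i • ballSlice E (g' i) (α i / 2))
        ⟨n, g', fun i => α i / 2, lam, hn, hnorm, fun i => half_pos (hα i), hlam, hsum, rfl⟩
    exact ⟨x₀, CCSaux.combo_subset hsub hx₀, F, δ, hδ,
      fun w hw => CCSaux.combo_subset hsub (hF hw)⟩

theorem CCSaux.arith {a b α gx hy : ℝ} (ha0 : 0 ≤ a) (hb0 : 0 ≤ b) (ha : a ≤ 1) (hb : b ≤ 1)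
    (hab : 1 ≤ a + b) (hα : 0 < α) (h1 : a * (1 - α / 2) ≤ gx) (h2 : b * (1 - α / 2) ≤ hy)
    (h1' : a = 0 ∨ a * (1 - α / 2) < gx) (h2' : b = 0 ∨ b * (1 - α / 2) < hy) :
    1 - α < gx + hy := by
  rcases h1' with h1' | h1'
  · rcases h2' with h2' | h2'
    · exfalso; linarith
    · have hb1 : b = 1 := by linarith
      subst h1'
      rw [hb1] at h2'
      simp at h1
      linarith
  · rcases h2' with h2' | h2'
    · have ha1 : a = 1 := by linarith
      subst h2'
      rw [ha1] at h1'
      simp at h2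
      linarith
    · nlinarith

end Aux

section Prod

variable {X Y : Type*} [NormedAddCommGroup X] [NormedSpace ℝ X]
  [NormedAddCommGroup Y] [NormedSpace ℝ Y]

namespace CCSaux

def inlL : X →L[ℝ] WithLp ⊤ (X × Y) :=
  (WithLp.prodContinuousLinearEquiv ⊤ ℝ X Y).symm.toContinuousLinearMap.comp
    (ContinuousLinearMap.inl ℝ X Y)

def inrL : Y →L[ℝ] WithLp ⊤ (X × Y) :=
  (WithLp.prodContinuousLinearEquiv ⊤ ℝ X Y).symm.toContinuousLinearMap.comp
    (ContinuousLinearMap.inr ℝ X Y)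

def fstL : WithLp ⊤ (X × Y) →L[ℝ] X :=
  (ContinuousLinearMap.fst ℝ X Y).comp
    (WithLp.prodContinuousLinearEquiv ⊤ ℝ X Y).toContinuousLinearMap

def sndL : WithLp ⊤ (X × Y) →L[ℝ] Y :=
  (ContinuousLinearMap.snd ℝ X Y).comp
    (WithLp.prodContinuousLinearEquiv ⊤ ℝ X Y).toContinuousLinearMap

theorem inl_add_inr (x : X) (y : Y) :
    (inlL x + inrL y : WithLp ⊤ (X × Y)) = (WithLp.equiv ⊤ (X × Y)).symm (x, y) := by
  simp [inlL, inrL, ← WithLp.toLp_add]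

theorem fstL_eq (z : WithLp ⊤ (X × Y)) : fstL z = z.fst := rfl
theorem sndL_eq (z : WithLp ⊤ (X × Y)) : sndL z = z.snd := rfl

theorem fstL_inl_add_inr (x : X) (y : Y) : fstL (inlL x + inrL y : WithLp ⊤ (X × Y)) = x := by
  simp [fstL, inlL, inrL]

theorem sndL_inl_add_inr (x : X) (y : Y) : sndL (inlL x + inrL y : WithLp ⊤ (X × Y)) = y := by
  simp [sndL, inlL, inrL]

theorem decomp (z : WithLp ⊤ (X × Y)) : inlL (fstL z) + inrL (sndL z) = z := by
  rw [inl_add_inr, fstL_eq, sndL_eq]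
  exact (WithLp.equiv ⊤ (X × Y)).symm_apply_apply z

theorem norm_inl_add_inr (x : X) (y : Y) :
    ‖(inlL x + inrL y : WithLp ⊤ (X × Y))‖ = max ‖x‖ ‖y‖ := by
  rw [inl_add_inr, WithLp.prod_norm_eq_sup]
  rfl

theorem norm_inlL (x : X) : ‖(inlL x : WithLp ⊤ (X × Y))‖ = ‖x‖ := by
  have := norm_inl_add_inr x (0 : Y); simpa using this

theorem norm_inrL (y : Y) : ‖(inrL y : WithLp ⊤ (X × Y))‖ = ‖y‖ := by
  have := norm_inl_add_inr (0 : X) y; simpa using this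

theorem norm_fstL_le (z : WithLp ⊤ (X × Y)) : ‖fstL z‖ ≤ ‖z‖ := by
  rw [fstL_eq, WithLp.prod_norm_eq_sup]; exact le_max_left _ _

theorem norm_sndL_le (z : WithLp ⊤ (X × Y)) : ‖sndL z‖ ≤ ‖z‖ := by
  rw [sndL_eq, WithLp.prod_norm_eq_sup]; exact le_max_right _ _

theorem norm_comp_inlL_le (f : StrongDual ℝ (WithLp ⊤ (X × Y))) :
    ‖f.comp (inlL : X →L[ℝ] WithLp ⊤ (X × Y))‖ ≤ ‖f‖ := by
  refine ContinuousLinearMap.opNorm_le_bound _ (norm_nonneg f) fun x => ?_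
  calc ‖f (inlL x)‖ ≤ ‖f‖ * ‖(inlL x : WithLp ⊤ (X × Y))‖ := f.le_opNorm _
    _ = ‖f‖ * ‖x‖ := by rw [norm_inlL]

theorem norm_comp_inrL_le (f : StrongDual ℝ (WithLp ⊤ (X × Y))) :
    ‖f.comp (inrL : Y →L[ℝ] WithLp ⊤ (X × Y))‖ ≤ ‖f‖ := by
  refine ContinuousLinearMap.opNorm_le_bound _ (norm_nonneg f) fun y => ?_
  calc ‖f (inrL y)‖ ≤ ‖f‖ * ‖(inrL y : WithLp ⊤ (X × Y))‖ := f.le_opNorm _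
    _ = ‖f‖ * ‖y‖ := by rw [norm_inrL]

theorem apply_eq (f : StrongDual ℝ (WithLp ⊤ (X × Y))) (z : WithLp ⊤ (X × Y)) :
    f z = f.comp inlL (fstL z) + f.comp inrL (sndL z) := by
  conv_lhs => rw [← decomp z]
  simp

theorem norm_le_add (f : StrongDual ℝ (WithLp ⊤ (X × Y))) :
    ‖f‖ ≤ ‖f.comp (inlL : X →L[ℝ] WithLp ⊤ (X × Y))‖ +
      ‖f.comp (inrL : Y →L[ℝ] WithLp ⊤ (X × Y))‖ := by
  refine ContinuousLinearMap.opNorm_le_bound _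
    (by positivity) fun z => ?_
  rw [apply_eq f z]
  calc ‖f.comp inlL (fstL z) + f.comp inrL (sndL z)‖
      ≤ ‖f.comp inlL (fstL z)‖ + ‖f.comp inrL (sndL z)‖ := norm_add_le _ _
    _ ≤ ‖f.comp inlL‖ * ‖fstL z‖ + ‖f.comp inrL‖ * ‖sndL z‖ :=
        add_le_add ((f.comp inlL).le_opNorm _) ((f.comp inrL).le_opNorm _)
    _ ≤ ‖f.comp inlL‖ * ‖z‖ + ‖f.comp inrL‖ * ‖z‖ :=
        add_le_add (mul_le_mul_of_nonneg_left (norm_fstL_le z) (norm_nonneg _))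
          (mul_le_mul_of_nonneg_left (norm_sndL_le z) (norm_nonneg _))
    _ = (‖f.comp inlL‖ + ‖f.comp inrL‖) * ‖z‖ := by ring

end CCSaux

end Prod

section Main

variable {X Y : Type*} [NormedAddCommGroup X] [NormedSpace ℝ X]
  [NormedAddCommGroup Y] [NormedSpace ℝ Y]

open CCSaux in
theorem CCSaux.forward_X (hPZ : PropP2 (WithLp ⊤ (X × Y))) : PropP2 X := by
  classical
  rintro C ⟨n, g, α, lam, hn, hg1, hα, hlam, hsum, hC⟩
  set f : Fin n → StrongDual ℝ (WithLp ⊤ (X × Y)) :=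
    fun i => (g i).comp fstL with hf
  have hf1 : ∀ i, ‖f i‖ = 1 := by
    intro i
    refine le_antisymm ?_ ?_
    · refine ContinuousLinearMap.opNorm_le_bound _ zero_le_one fun z => ?_
      calc ‖(g i) (fstL z)‖ ≤ ‖g i‖ * ‖fstL z‖ := (g i).le_opNorm _
        _ ≤ 1 * ‖z‖ := by
            rw [hg1 i, one_mul, one_mul]; exact norm_fstL_le z
    · rw [← hg1 i]
      refine ContinuousLinearMap.opNorm_le_bound _ (norm_nonneg _) fun x => ?_
      calc ‖(g i) x‖ = ‖(f i) (inlL x)‖ := by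
            have hx : fstL (inlL x : WithLp ⊤ (X × Y)) = x := by
              simpa using fstL_inl_add_inr x (0 : Y)
            simp [hf, hx]
        _ ≤ ‖f i‖ * ‖(inlL x : WithLp ⊤ (X × Y))‖ := (f i).le_opNorm _
        _ = ‖f i‖ * ‖x‖ := by rw [norm_inlL]
  set Cz : Set (WithLp ⊤ (X × Y)) := ∑ i, lam i • ballSlice _ (f i) (α i) with hCz
  have hproj : ∀ z ∈ Cz, fstL z ∈ C := by
    intro z hz
    rw [hCz, CCSaux.mem_combo] at hz
    obtain ⟨c, hc, rfl⟩ := hz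
    rw [hC, CCSaux.mem_combo]
    refine ⟨fun i => fstL (c i), fun i => ?_, by rw [map_sum]; simp⟩
    obtain ⟨hc1, hc2⟩ := hc i
    refine ⟨?_, hc2⟩
    rw [Metric.mem_closedBall, dist_zero_right] at hc1 ⊢
    exact le_trans (norm_fstL_le _) hc1
  obtain ⟨z₀, hz₀, F, δ, hδ, hF⟩ :=
    hPZ Cz ⟨n, f, α, lam, hn, hf1, hα, hlam, hsum, rfl⟩
  have hz₀ball : ‖z₀‖ ≤ 1 := by
    have := CCSaux.combo_subset_ball hlam hsum
      (fun i => fun z (hz : z ∈ ballSlice _ (f i) (α i)) => hz.1) hz₀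
    rwa [Metric.mem_closedBall, dist_zero_right] at this
  refine ⟨fstL z₀, hproj z₀ hz₀, F.image (fun φ => φ.comp inlL), δ, hδ, ?_⟩
  rintro w ⟨hw1, hw2⟩
  rw [Metric.mem_closedBall, dist_zero_right] at hw1
  set zw : WithLp ⊤ (X × Y) := inlL w + inrL (sndL z₀) with hzw
  have hzwC : zw ∈ Cz := by
    refine hF ⟨?_, ?_⟩
    · rw [Metric.mem_closedBall, dist_zero_right, hzw, norm_inl_add_inr]
      exact max_le hw1 (le_trans (norm_sndL_le _) hz₀ball)
    · intro φ hφ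
      have key : φ zw - φ z₀ = (φ.comp inlL) w - (φ.comp inlL) (fstL z₀) := by
        have : zw - z₀ = inlL (w - fstL z₀) := by
          calc zw - z₀ = (inlL w + inrL (sndL z₀)) - (inlL (fstL z₀) + inrL (sndL z₀)) := by
                rw [hzw, decomp z₀]
            _ = inlL (w - fstL z₀) := by rw [map_sub]; abel
        have h2 : φ (zw - z₀) = φ (inlL (w - fstL z₀)) := by rw [this]
        rw [map_sub] at h2
        simpa [map_sub] using h2
      rw [key]
      exact hw2 _ (Finset.mem_image_of_mem _ hφ)
  have := hproj zw hzwC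
  rwa [hzw, fstL_inl_add_inr] at this

open CCSaux in
theorem CCSaux.forward_Y (hPZ : PropP2 (WithLp ⊤ (X × Y))) : PropP2 Y := by
  classical
  rintro C ⟨n, g, α, lam, hn, hg1, hα, hlam, hsum, hC⟩
  set f : Fin n → StrongDual ℝ (WithLp ⊤ (X × Y)) :=
    fun i => (g i).comp sndL with hf
  have hf1 : ∀ i, ‖f i‖ = 1 := by
    intro i
    refine le_antisymm ?_ ?_
    · refine ContinuousLinearMap.opNorm_le_bound _ zero_le_one fun z => ?_
      calc ‖(g i) (sndL z)‖ ≤ ‖g i‖ * ‖sndL z‖ := (g i).le_opNorm _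
        _ ≤ 1 * ‖z‖ := by
            rw [hg1 i, one_mul, one_mul]; exact norm_sndL_le z
    · rw [← hg1 i]
      refine ContinuousLinearMap.opNorm_le_bound _ (norm_nonneg _) fun y => ?_
      calc ‖(g i) y‖ = ‖(f i) (inrL y)‖ := by
            have hy : sndL (inrL y : WithLp ⊤ (X × Y)) = y := by
              simpa using sndL_inl_add_inr (0 : X) y
            simp [hf, hy]
        _ ≤ ‖f i‖ * ‖(inrL y : WithLp ⊤ (X × Y))‖ := (f i).le_opNorm _
        _ = ‖f i‖ * ‖y‖ := by rw [norm_inrL]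
  set Cz : Set (WithLp ⊤ (X × Y)) := ∑ i, lam i • ballSlice _ (f i) (α i) with hCz
  have hproj : ∀ z ∈ Cz, sndL z ∈ C := by
    intro z hz
    rw [hCz, CCSaux.mem_combo] at hz
    obtain ⟨c, hc, rfl⟩ := hz
    rw [hC, CCSaux.mem_combo]
    refine ⟨fun i => sndL (c i), fun i => ?_, by rw [map_sum]; simp⟩
    obtain ⟨hc1, hc2⟩ := hc i
    refine ⟨?_, hc2⟩
    rw [Metric.mem_closedBall, dist_zero_right] at hc1 ⊢
    exact le_trans (norm_sndL_le _) hc1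
  obtain ⟨z₀, hz₀, F, δ, hδ, hF⟩ :=
    hPZ Cz ⟨n, f, α, lam, hn, hf1, hα, hlam, hsum, rfl⟩
  have hz₀ball : ‖z₀‖ ≤ 1 := by
    have := CCSaux.combo_subset_ball hlam hsum
      (fun i => fun z (hz : z ∈ ballSlice _ (f i) (α i)) => hz.1) hz₀
    rwa [Metric.mem_closedBall, dist_zero_right] at this
  refine ⟨sndL z₀, hproj z₀ hz₀, F.image (fun φ => φ.comp inrL), δ, hδ, ?_⟩
  rintro w ⟨hw1, hw2⟩
  rw [Metric.mem_closedBall, dist_zero_right] at hw1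
  set zw : WithLp ⊤ (X × Y) := inlL (fstL z₀) + inrL w with hzw
  have hzwC : zw ∈ Cz := by
    refine hF ⟨?_, ?_⟩
    · rw [Metric.mem_closedBall, dist_zero_right, hzw, norm_inl_add_inr]
      exact max_le (le_trans (norm_fstL_le _) hz₀ball) hw1
    · intro φ hφ
      have key : φ zw - φ z₀ = (φ.comp inrL) w - (φ.comp inrL) (sndL z₀) := by
        have : zw - z₀ = inrL (w - sndL z₀) := by
          calc zw - z₀ = (inlL (fstL z₀) + inrL w) - (inlL (fstL z₀) + inrL (sndL z₀)) := by
                rw [hzw, decomp z₀]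
            _ = inrL (w - sndL z₀) := by rw [map_sub]; abel
        have h2 : φ (zw - z₀) = φ (inrL (w - sndL z₀)) := by rw [this]
        rw [map_sub] at h2
        simpa [map_sub] using h2
      rw [key]
      exact hw2 _ (Finset.mem_image_of_mem _ hφ)
  have := hproj zw hzwC
  rwa [hzw, sndL_inl_add_inr] at this

open CCSaux in
theorem CCSaux.backward (hPX : PropP2 X) (hPY : PropP2 Y) : PropP2 (WithLp ⊤ (X × Y)) := by
  classical
  rintro C ⟨n, f, α, lam, hn, hf1, hα, hlam, hsum, hC⟩
  set g : Fin n → StrongDual ℝ X := fun i => (f i).comp inlL with hg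
  set h : Fin n → StrongDual ℝ Y := fun i => (f i).comp inrL with hh
  have hga : ∀ i, ‖g i‖ ≤ 1 := fun i => (hf1 i) ▸ norm_comp_inlL_le (f i)
  have hhb : ∀ i, ‖h i‖ ≤ 1 := fun i => (hf1 i) ▸ norm_comp_inrL_le (f i)
  have hab : ∀ i, 1 ≤ ‖g i‖ + ‖h i‖ := fun i => (hf1 i) ▸ norm_le_add (f i)
  -- key pointwise fact
  have key : ∀ (i : Fin n) (x : X) (y : Y), x ∈ CCSaux.sideSet (g i) (α i) →
      y ∈ CCSaux.sideSet (h i) (α i) →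
      (inlL x + inrL y : WithLp ⊤ (X × Y)) ∈ ballSlice _ (f i) (α i) := by
    rintro i x y ⟨hx1, hx2, hx3⟩ ⟨hy1, hy2, hy3⟩
    rw [Metric.mem_closedBall, dist_zero_right] at hx1 hy1
    constructor
    · rw [Metric.mem_closedBall, dist_zero_right, norm_inl_add_inr]
      exact max_le hx1 hy1
    · have hval : (f i) (inlL x + inrL y) = g i x + h i y := by simp [hg, hh]
      rw [hval]
      refine CCSaux.arith (norm_nonneg (g i)) (norm_nonneg (h i)) (hga i) (hhb i)
        (hab i) (hα i) hx2 hy2 ?_ ?_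
      · rcases hx3 with h0 | hlt
        · exact Or.inl (by rw [h0, norm_zero])
        · exact Or.inr hlt
      · rcases hy3 with h0 | hlt
        · exact Or.inl (by rw [h0, norm_zero])
        · exact Or.inr hlt
  -- combining memberships
  have combine : ∀ (x : X) (y : Y), x ∈ (∑ i, lam i • CCSaux.sideSet (g i) (α i)) →
      y ∈ (∑ i, lam i • CCSaux.sideSet (h i) (α i)) →
      (inlL x + inrL y : WithLp ⊤ (X × Y)) ∈ C := by
    intro x y hx hy
    rw [CCSaux.mem_combo] at hx hy
    obtain ⟨c, hc, rfl⟩ := hx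
    obtain ⟨d, hd, rfl⟩ := hy
    rw [hC, CCSaux.mem_combo]
    refine ⟨fun i => inlL (c i) + inrL (d i), fun i => key i _ _ (hc i) (hd i), ?_⟩
    rw [map_sum, map_sum, ← Finset.sum_add_distrib]
    congr 1
    ext i
    rw [map_smul, map_smul, smul_add]
  obtain ⟨x₀, hx₀, FX, δX, hδX, hFX⟩ :=
    CCSaux.side_lemma hn g α lam hα hlam hsum hPX
  obtain ⟨y₀, hy₀, FY, δY, hδY, hFY⟩ :=
    CCSaux.side_lemma hn h α lam hα hlam hsum hPY
  refine ⟨inlL x₀ + inrL y₀, combine x₀ y₀ hx₀ hy₀,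
    FX.image (fun φ => φ.comp fstL) ∪ FY.image (fun φ => φ.comp sndL),
    min δX δY, lt_min hδX hδY, ?_⟩
  rintro w ⟨hw1, hw2⟩
  rw [Metric.mem_closedBall, dist_zero_right] at hw1
  have hwx : fstL w ∈ ∑ i, lam i • CCSaux.sideSet (g i) (α i) := by
    refine hFX ⟨?_, ?_⟩
    · rw [Metric.mem_closedBall, dist_zero_right]
      exact le_trans (norm_fstL_le w) hw1
    · intro φ hφ
      have := hw2 (φ.comp fstL)
        (Finset.mem_union_left _ (Finset.mem_image_of_mem _ hφ))
      have heq : (φ.comp fstL) (inlL x₀ + inrL y₀ : WithLp ⊤ (X × Y)) = φ x₀ := by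
        rw [ContinuousLinearMap.comp_apply, fstL_inl_add_inr]
      rw [heq] at this
      exact lt_of_lt_of_le this (min_le_left _ _)
  have hwy : sndL w ∈ ∑ i, lam i • CCSaux.sideSet (h i) (α i) := by
    refine hFY ⟨?_, ?_⟩
    · rw [Metric.mem_closedBall, dist_zero_right]
      exact le_trans (norm_sndL_le w) hw1
    · intro φ hφ
      have := hw2 (φ.comp sndL)
        (Finset.mem_union_right _ (Finset.mem_image_of_mem _ hφ))
      have heq : (φ.comp sndL) (inlL x₀ + inrL y₀ : WithLp ⊤ (X × Y)) = φ y₀ := by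
        rw [ContinuousLinearMap.comp_apply, sndL_inl_add_inr]
      rw [heq] at this
      exact lt_of_lt_of_le this (min_le_right _ _)
  have := combine _ _ hwx hwy
  rwa [decomp w] at this


end Main

/-- Every finite convex combination of slices of the closed unit
ball of `X ⊕_∞ Y` has nonempty interior in the relative weak topology of the closed
unit ball if and only if both `X` and `Y` have the corresponding property. -/
theorem propP2_infty_sum_iff
    {X Y : Type*} [NormedAddCommGroup X] [NormedSpace ℝ X] [CompleteSpace X]
    [NormedAddCommGroup Y] [NormedSpace ℝ Y] [CompleteSpace Y] :
    PropP2 (WithLp ⊤ (X × Y)) ↔ PropP2 X ∧ PropP2 Y := by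
  exact ⟨fun hZ => ⟨CCSaux.forward_X hZ, CCSaux.forward_Y hZ⟩,
    fun ⟨hX, hY⟩ => CCSaux.backward hX hY⟩
end
end

section
/- Let X and Y be infinite-dimensional Banach spaces. If every finite convex combination of slices of the closed unit ball of X intersects the unit sphere of X, then every finite convex combination of slices of the closed unit ball of X ⊕_∞ Y intersects the unit sphere of X ⊕_∞ Y. -/
open scoped Pointwise

noncomputable section

lemma exists_ball_gt {Z : Type*} [NormedAddCommGroup Z] [NormedSpace ℝ Z]
    (F : Z →L[ℝ] ℝ) {c : ℝ} (h : c < ‖F‖) : ∃ z, ‖z‖ ≤ 1 ∧ c < F z := by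
  obtain ⟨x, hx1, hx2⟩ := F.exists_lt_apply_of_lt_opNorm h
  rcases le_or_gt 0 (F x) with h0 | h0
  · exact ⟨x, hx1.le, by rwa [Real.norm_eq_abs, abs_of_nonneg h0] at hx2⟩
  · refine ⟨-x, by simpa using hx1.le, ?_⟩
    rw [map_neg]
    rwa [Real.norm_eq_abs, abs_of_neg h0] at hx2


set_option maxHeartbeats 1600000

/-- If every finite convex combination of slices of the closed unit
ball of `X` intersects the unit sphere of `X`, then every finite convex combination
of slices of the closed unit ball of `X ⊕_∞ Y` intersects the unit sphere of
`X ⊕_∞ Y`. -/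
theorem propP3_infty_sum
    {X Y : Type*} [NormedAddCommGroup X] [NormedSpace ℝ X] [CompleteSpace X]
    [NormedAddCommGroup Y] [NormedSpace ℝ Y] [CompleteSpace Y]
    (hXinf : ¬ FiniteDimensional ℝ X) (hYinf : ¬ FiniteDimensional ℝ Y)
    (hX : PropP3 X) :
    PropP3 (WithLp ⊤ (X × Y)) := by
  classical
  intro C hC
  obtain ⟨n, F, α, lam, hn, hF, hα, hlam, hsum, hCeq⟩ := hC
  -- X is nontrivial
  have hXnt : Nontrivial X := by
    by_contra h
    have : Subsingleton X := not_nontrivial_iff_subsingleton.mp h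
    exact hXinf inferInstance
  obtain ⟨x₀, hx₀⟩ := exists_ne (0 : X)
  obtain ⟨φ₀, hφ₀, -⟩ := exists_dual_vector ℝ x₀ (norm_ne_zero_iff.mpr hx₀)
  set L : WithLp ⊤ (X × Y) ≃L[ℝ] X × Y := WithLp.prodContinuousLinearEquiv ⊤ ℝ X Y with hL
  set f : Fin n → StrongDual ℝ X := fun i =>
    (F i).comp ((L.symm : (X × Y) →L[ℝ] WithLp ⊤ (X × Y)).comp (ContinuousLinearMap.inl ℝ X Y)) with hf
  set g : Fin n → StrongDual ℝ Y := fun i =>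
    (F i).comp ((L.symm : (X × Y) →L[ℝ] WithLp ⊤ (X × Y)).comp (ContinuousLinearMap.inr ℝ X Y)) with hg
  have hFdec : ∀ (i : Fin n) (x : X) (y : Y),
      (F i) (L.symm (x, y)) = f i x + g i y := by
    intro i x y
    have : ((x, y) : X × Y) = ((x, 0) : X × Y) + ((0, y) : X × Y) := by simp
    rw [this, map_add, map_add]
    rfl
  set ε : Fin n → ℝ := fun i => α i / 3 with hε
  have hεpos : ∀ i, 0 < ε i := fun i => by exact div_pos (hα i) (by norm_num)
  set a : Fin n → ℝ := fun i => ‖f i‖ with ha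
  set b : Fin n → ℝ := fun i => ‖g i‖ with hb
  -- norm of fst, snd ≤ norm in WithLp ⊤
  have hnorm : ∀ z : WithLp ⊤ (X × Y), ‖z‖ = ‖(L z).1‖ ⊔ ‖(L z).2‖ := by
    intro z
    rw [WithLp.prod_norm_eq_sup]
    rfl
  have hab : ∀ i, 1 ≤ a i + b i := by
    intro i
    by_contra h
    push_neg at h
    obtain ⟨z, hz1, hz2⟩ := exists_ball_gt (F i) (c := a i + b i) (by rw [hF i]; linarith)
    have hz : F i z = f i (L z).1 + g i (L z).2 := by
      have := hFdec i (L z).1 (L z).2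
      simpa using this
    have h1 : f i (L z).1 ≤ a i := by
      calc f i (L z).1 ≤ ‖f i (L z).1‖ := le_abs_self _
        _ ≤ ‖f i‖ * ‖(L z).1‖ := (f i).le_opNorm _
        _ ≤ a i * 1 := by
            apply mul_le_mul_of_nonneg_left _ (norm_nonneg _)
            calc ‖(L z).1‖ ≤ ‖z‖ := by rw [hnorm z]; exact le_sup_left
              _ ≤ 1 := hz1
        _ = a i := mul_one _
    have h2 : g i (L z).2 ≤ b i := by
      calc g i (L z).2 ≤ ‖g i (L z).2‖ := le_abs_self _
        _ ≤ ‖g i‖ * ‖(L z).2‖ := (g i).le_opNorm _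
        _ ≤ b i * 1 := by
            apply mul_le_mul_of_nonneg_left _ (norm_nonneg _)
            calc ‖(L z).2‖ ≤ ‖z‖ := by rw [hnorm z]; exact le_sup_right
              _ ≤ 1 := hz1
        _ = b i := mul_one _
    rw [hz] at hz2
    linarith
  -- modified X functionals
  set ftil : Fin n → StrongDual ℝ X := fun i =>
    if h : f i = 0 then φ₀ else ‖f i‖⁻¹ • f i with hftil
  have hftilnorm : ∀ i, ‖ftil i‖ = 1 := by
    intro i
    rw [hftil]
    by_cases h : f i = 0
    · simp [h, hφ₀]
    · simp only [h, dif_neg, not_false_iff]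
      rw [norm_smul, norm_inv, norm_norm]
      exact inv_mul_cancel₀ (norm_ne_zero_iff.mpr h)
  set β : Fin n → ℝ := fun i => ε i / (a i + 1) with hβ
  have hapos : ∀ i, 0 ≤ a i := fun i => norm_nonneg _
  have hβpos : ∀ i, 0 < β i := by
    intro i
    apply div_pos (hεpos i)
    linarith [hapos i]
  have hkey : ∀ (i : Fin n) (x : X), ‖x‖ ≤ 1 → 1 - β i < ftil i x → a i - ε i < f i x := by
    intro i x _ hx
    rw [hftil] at hx
    by_cases h : f i = 0
    · have : a i = 0 := by simp [ha, h]
      rw [h, this]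
      simpa using hεpos i
    · simp only [h, dif_neg, not_false_iff, ContinuousLinearMap.smul_apply, smul_eq_mul] at hx
      have hfi : (0:ℝ) < ‖f i‖ := norm_pos_iff.mpr h
      have hai : a i = ‖f i‖ := rfl
      have hβi : β i = ε i / (a i + 1) := rfl
      have hεi : 0 < ε i := hεpos i
      have hmul : ‖f i‖ * (1 - β i) < f i x := by
        have := mul_lt_mul_of_pos_left hx hfi
        rwa [mul_inv_cancel_left₀ (ne_of_gt hfi)] at this
      have hbound : a i * β i < ε i := by
        rw [hβi, mul_div_assoc']
        rw [div_lt_iff₀ (by linarith [hapos i] : (0:ℝ) < a i + 1)]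
        nlinarith [hεi, hapos i]
      calc a i - ε i < a i * (1 - β i) := by nlinarith
        _ = ‖f i‖ * (1 - β i) := by rw [hai]
        _ < f i x := hmul
  -- choose y i
  have hychoice : ∀ i : Fin n, ∃ y : Y, ‖y‖ ≤ 1 ∧ b i - ε i < g i y := by
    intro i
    exact exists_ball_gt (g i) (by linarith [hεpos i])
  choose y hy1 hy2 using hychoice
  -- apply hX
  obtain ⟨x, hxC, hxnorm⟩ := hX (∑ i, lam i • ballSlice X (ftil i) (β i))
    ⟨n, ftil, β, lam, hn, hftilnorm, hβpos, hlam, hsum, rfl⟩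
  rw [Set.mem_fintype_sum] at hxC
  obtain ⟨c, hc, hcx⟩ := hxC
  have hc' : ∀ i, ∃ s ∈ ballSlice X (ftil i) (β i), lam i • s = c i := by
    intro i
    exact Set.mem_smul_set.mp (hc i)
  choose xs hxs1 hxs2 using hc'
  -- build z
  set z : WithLp ⊤ (X × Y) := ∑ i, lam i • (L.symm (xs i, y i)) with hz
  have hslice : ∀ i, L.symm (xs i, y i) ∈ ballSlice (WithLp ⊤ (X × Y)) (F i) (α i) := by
    intro i
    constructor
    · rw [Metric.mem_closedBall, dist_zero_right, hnorm]
      simp only [ContinuousLinearEquiv.apply_symm_apply]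
      obtain ⟨hxs1a, hxs1b⟩ := hxs1 i
      rw [Metric.mem_closedBall, dist_zero_right] at hxs1a
      exact sup_le hxs1a (hy1 i)
    · show 1 - α i < F i (L.symm (xs i, y i))
      rw [hFdec]
      obtain ⟨hxs1a, hxs1b⟩ := hxs1 i
      rw [Metric.mem_closedBall, dist_zero_right] at hxs1a
      have h1 : a i - ε i < f i (xs i) := hkey i (xs i) hxs1a hxs1b
      have h2 : b i - ε i < g i (y i) := hy2 i
      have h3 := hab i
      have h4 := hα i
      rw [hε] at *
      simp only at h1 h2 ⊢
      linarith
  refine ⟨z, ?_, ?_⟩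
  · rw [hCeq, Set.mem_fintype_sum]
    exact ⟨fun i => lam i • (L.symm (xs i, y i)),
      fun i => Set.smul_mem_smul_set (hslice i), rfl⟩
  · -- norm of z
    have hLz : L z = (∑ i, lam i • xs i, ∑ i, lam i • y i) := by
      rw [hz, map_sum]
      simp only [map_smul, ContinuousLinearEquiv.apply_symm_apply]
      rw [Prod.ext_iff]
      constructor
      · rw [Prod.fst_sum]; simp
      · rw [Prod.snd_sum]; simp
    have hfst : (L z).1 = x := by
      rw [hLz]
      simp only
      rw [← hcx]
      exact Finset.sum_congr rfl fun i _ => hxs2 i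
    have hsnd : ‖(L z).2‖ ≤ 1 := by
      rw [hLz]
      simp only
      calc ‖∑ i, lam i • y i‖ ≤ ∑ i, ‖lam i • y i‖ := norm_sum_le _ _
        _ ≤ ∑ i, lam i := by
            apply Finset.sum_le_sum
            intro i _
            rw [norm_smul, Real.norm_eq_abs, abs_of_nonneg (hlam i)]
            exact mul_le_of_le_one_right (hlam i) (hy1 i)
        _ = 1 := hsum
    rw [hnorm, hfst, hxnorm]
    exact sup_eq_left.mpr hsnd
end
end

section
/- Let X and Y be Banach spaces and let C be a finite convex combination of slices of the closed unit ball of X. Then C × B_Y is a finite convex combination of slices of the closed unit ball of X ⊕_∞ Y; in particular, if every finite convex combination of slices of the unit ball of X ⊕_∞ Y is relatively weakly open (resp. has nonempty relative weak interior), then the same holds for X. -/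
open scoped Pointwise

noncomputable section

section Aux

variable {X Y : Type*} [NormedAddCommGroup X] [NormedSpace ℝ X]
  [NormedAddCommGroup Y] [NormedSpace ℝ Y]

/-- The inclusion `x ↦ (x, 0)` as a continuous linear map `X → X ⊕_∞ Y`. -/
def inclZ : X →L[ℝ] WithLp ⊤ (X × Y) :=
  (WithLp.prodContinuousLinearEquiv ⊤ ℝ X Y).symm.toContinuousLinearMap.comp
    (ContinuousLinearMap.inl ℝ X Y)

/-- Lifting a functional on `X` to `X ⊕_∞ Y` via the first coordinate. -/
def liftDual (f : StrongDual ℝ X) : StrongDual ℝ (WithLp ⊤ (X × Y)) :=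
  f.comp ((ContinuousLinearMap.fst ℝ X Y).comp
    (WithLp.prodContinuousLinearEquiv ⊤ ℝ X Y).toContinuousLinearMap)

theorem liftDual_apply (f : StrongDual ℝ X) (w : WithLp ⊤ (X × Y)) :
    liftDual (Y := Y) f w = f (WithLp.equiv ⊤ (X × Y) w).1 := rfl

theorem memBallZ_iff (w : WithLp ⊤ (X × Y)) :
    w ∈ Metric.closedBall (0 : WithLp ⊤ (X × Y)) 1 ↔
      (WithLp.equiv ⊤ (X × Y) w).1 ∈ Metric.closedBall (0 : X) 1 ∧
      (WithLp.equiv ⊤ (X × Y) w).2 ∈ Metric.closedBall (0 : Y) 1 := by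
  simp only [mem_closedBall_zero_iff, WithLp.prod_norm_eq_sup, sup_le_iff,
    WithLp.equiv_apply, WithLp.ofLp_fst, WithLp.ofLp_snd]

theorem norm_inclZ (x : X) : ‖inclZ (Y := Y) x‖ = ‖x‖ := by
  rw [WithLp.prod_norm_eq_sup]
  show ‖x‖ ⊔ ‖(0 : Y)‖ = ‖x‖
  simp

theorem norm_liftDual (f : StrongDual ℝ X) (hf : ‖f‖ = 1) :
    ‖liftDual (Y := Y) f‖ = 1 := by
  refine le_antisymm (ContinuousLinearMap.opNorm_le_bound _ zero_le_one fun w => ?_) ?_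
  · rw [liftDual_apply, one_mul]
    calc ‖f (WithLp.equiv ⊤ (X × Y) w).1‖ ≤ ‖f‖ * ‖(WithLp.equiv ⊤ (X × Y) w).1‖ :=
          f.le_opNorm _
      _ = ‖(WithLp.equiv ⊤ (X × Y) w).1‖ := by rw [hf, one_mul]
      _ ≤ ‖w‖ := by
          rw [WithLp.prod_norm_eq_sup]; exact le_sup_left
  · rw [← hf]
    refine f.opNorm_le_bound (norm_nonneg _) fun x => ?_
    have h := (liftDual (Y := Y) f).le_opNorm (inclZ x)
    rw [norm_inclZ] at h
    exact h.trans_eq' rfl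

theorem liftSlice (f : StrongDual ℝ X) (α : ℝ) :
    ballSlice (WithLp ⊤ (X × Y)) (liftDual f) α =
      {w : WithLp ⊤ (X × Y) | (WithLp.equiv ⊤ (X × Y) w).1 ∈ ballSlice X f α ∧
        (WithLp.equiv ⊤ (X × Y) w).2 ∈ Metric.closedBall (0 : Y) 1} := by
  ext w
  simp only [ballSlice, Set.mem_setOf_eq, memBallZ_iff, liftDual_apply]
  tauto

theorem prodSet_sum (n : ℕ) (S : Fin n → Set X) (lam : Fin n → ℝ)
    (hlam : ∀ i, 0 ≤ lam i) (hsum : ∑ i, lam i = 1) :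
    {w : WithLp ⊤ (X × Y) | (WithLp.equiv ⊤ (X × Y) w).1 ∈ ∑ i, lam i • S i ∧
        (WithLp.equiv ⊤ (X × Y) w).2 ∈ Metric.closedBall (0 : Y) 1} =
      ∑ i, lam i • {w : WithLp ⊤ (X × Y) | (WithLp.equiv ⊤ (X × Y) w).1 ∈ S i ∧
        (WithLp.equiv ⊤ (X × Y) w).2 ∈ Metric.closedBall (0 : Y) 1} := by
  set e := WithLp.linearEquiv ⊤ ℝ (X × Y) with he
  ext w
  constructor
  · rintro ⟨h1, h2⟩
    rw [Set.mem_fintype_sum] at h1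
    obtain ⟨s, hs, hsum'⟩ := h1
    choose u hu hus using fun i => Set.mem_smul_set.1 (hs i)
    rw [Set.mem_fintype_sum]
    refine ⟨fun i => lam i • e.symm (u i, (WithLp.equiv ⊤ (X × Y) w).2),
      fun i => Set.smul_mem_smul_set ⟨hu i, h2⟩, ?_⟩
    apply e.injective
    rw [map_sum]
    have : ∀ i : Fin n, e (lam i • e.symm (u i, (WithLp.equiv ⊤ (X × Y) w).2)) =
        (lam i • u i, lam i • (WithLp.equiv ⊤ (X × Y) w).2) := fun i => by
      rw [map_smul, e.apply_symm_apply]; rfl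
    rw [Finset.sum_congr rfl fun i _ => this i]
    have hfst : (∑ i : Fin n, (lam i • u i, lam i • (WithLp.equiv ⊤ (X × Y) w).2)).1
        = ∑ i : Fin n, lam i • u i := Prod.fst_sum
    have hsnd : (∑ i : Fin n, (lam i • u i, lam i • (WithLp.equiv ⊤ (X × Y) w).2)).2
        = ∑ i : Fin n, lam i • (WithLp.equiv ⊤ (X × Y) w).2 := Prod.snd_sum
    refine Prod.ext ?_ ?_
    · rw [hfst]
      show (∑ i : Fin n, lam i • u i) = (WithLp.equiv ⊤ (X × Y) w).1
      rw [← hsum']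
      exact Finset.sum_congr rfl fun i _ => hus i
    · rw [hsnd, ← Finset.sum_smul, hsum, one_smul]; rfl
  · intro hw
    rw [Set.mem_fintype_sum] at hw
    obtain ⟨t, ht, hsum'⟩ := hw
    choose v hv hvt using fun i => Set.mem_smul_set.1 (ht i)
    have hw' : (WithLp.equiv ⊤ (X × Y) w : X × Y) =
        ∑ i : Fin n, lam i • (e (v i) : X × Y) := by
      show e w = _
      rw [← hsum', map_sum]
      exact Finset.sum_congr rfl fun i _ => by rw [← hvt i, map_smul]
    have hfst : (WithLp.equiv ⊤ (X × Y) w).1 = ∑ i : Fin n, lam i • (e (v i)).1 := by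
      rw [hw', Prod.fst_sum]
      exact Finset.sum_congr rfl fun i _ => rfl
    have hsnd : (WithLp.equiv ⊤ (X × Y) w).2 = ∑ i : Fin n, lam i • (e (v i)).2 := by
      rw [hw', Prod.snd_sum]
      exact Finset.sum_congr rfl fun i _ => rfl
    constructor
    · rw [Set.mem_fintype_sum]
      exact ⟨fun i => lam i • (e (v i)).1,
        fun i => Set.smul_mem_smul_set (hv i).1, hfst.symm⟩
    · rw [hsnd]
      exact (convex_closedBall (0 : Y) 1).sum_mem (fun i _ => hlam i)
        hsum (fun i _ => (hv i).2)

theorem isCCS_prod (C : Set X) (h : IsCCS X C) :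
    IsCCS (WithLp ⊤ (X × Y))
      {w : WithLp ⊤ (X × Y) | (WithLp.equiv ⊤ (X × Y) w).1 ∈ C ∧
        (WithLp.equiv ⊤ (X × Y) w).2 ∈ Metric.closedBall (0 : Y) 1} := by
  obtain ⟨n, f, α, lam, hn, hf, hα, hlam, hsum, hC⟩ := h
  refine ⟨n, fun i => liftDual (f i), α, lam, hn, fun i => norm_liftDual _ (hf i),
    hα, hlam, hsum, ?_⟩
  rw [hC, prodSet_sum n (fun i => ballSlice X (f i) (α i)) lam hlam hsum]
  exact Finset.sum_congr rfl fun i _ => by rw [liftSlice]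

end Aux

/-- For a finite convex combination of slices `C` of the closed
unit ball of `X`, the set `C × B_Y` is a finite convex combination of slices of the
closed unit ball of `X ⊕_∞ Y`; in particular, if every finite convex combination of
slices of the unit ball of `X ⊕_∞ Y` is relatively weakly open (resp. has nonempty
relative weak interior), then the same holds for `X`. -/
theorem ccs_prod_ball_infty_sum
    {X Y : Type*} [NormedAddCommGroup X] [NormedSpace ℝ X] [CompleteSpace X]
    [NormedAddCommGroup Y] [NormedSpace ℝ Y] [CompleteSpace Y] :
    (∀ C : Set X, IsCCS X C →
      IsCCS (WithLp ⊤ (X × Y))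
        {w : WithLp ⊤ (X × Y) | (WithLp.equiv ⊤ (X × Y) w).1 ∈ C ∧
          (WithLp.equiv ⊤ (X × Y) w).2 ∈ Metric.closedBall (0 : Y) 1}) ∧
    (PropP1 (WithLp ⊤ (X × Y)) → PropP1 X) ∧
    (PropP2 (WithLp ⊤ (X × Y)) → PropP2 X) := by
  classical
  constructor
  · exact fun C hC => isCCS_prod C hC
  constructor
  · -- P1 transfer
    intro hP1 C hC x hx
    have hC' := isCCS_prod (Y := Y) C hC
    have hz : inclZ (Y := Y) x ∈
        {w : WithLp ⊤ (X × Y) | (WithLp.equiv ⊤ (X × Y) w).1 ∈ C ∧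
          (WithLp.equiv ⊤ (X × Y) w).2 ∈ Metric.closedBall (0 : Y) 1} :=
      ⟨hx, show (0 : Y) ∈ Metric.closedBall (0 : Y) 1 by simp⟩
    obtain ⟨F, δ, hδ, hsub⟩ := hP1 _ hC' _ hz
    refine ⟨F.image (fun g => g.comp (inclZ (Y := Y))), δ, hδ, fun w hw => ?_⟩
    obtain ⟨hwB, hwF⟩ := hw
    have : inclZ (Y := Y) w ∈
        {v ∈ Metric.closedBall (0 : WithLp ⊤ (X × Y)) 1 |
          ∀ g ∈ F, |g v - g (inclZ (Y := Y) x)| < δ} := by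
      refine ⟨(memBallZ_iff _).2 ⟨hwB, show (0 : Y) ∈ Metric.closedBall (0 : Y) 1 by simp⟩, fun g hg => ?_⟩
      exact hwF _ (Finset.mem_image_of_mem _ hg)
    exact (hsub this).1
  · -- P2 transfer
    intro hP2 C hC
    have hC' := isCCS_prod (Y := Y) C hC
    obtain ⟨z, hzC, F, δ, hδ, hsub⟩ := hP2 _ hC'
    refine ⟨(WithLp.equiv ⊤ (X × Y) z).1, hzC.1,
      F.image (fun g => g.comp (inclZ (Y := Y))), δ, hδ, fun w hw => ?_⟩
    obtain ⟨hwB, hwF⟩ := hw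
    set v : WithLp ⊤ (X × Y) :=
      (WithLp.equiv ⊤ (X × Y)).symm (w, (WithLp.equiv ⊤ (X × Y) z).2) with hv
    have hvz : v - z = inclZ (Y := Y) (w - (WithLp.equiv ⊤ (X × Y) z).1) := by
      apply (WithLp.equiv ⊤ (X × Y)).injective
      rw [show ∀ a b : WithLp ⊤ (X × Y), WithLp.equiv ⊤ (X × Y) (a - b) =
          WithLp.equiv ⊤ (X × Y) a - WithLp.equiv ⊤ (X × Y) b from fun _ _ => rfl, hv, (WithLp.equiv ⊤ (X × Y)).apply_symm_apply]
      show (w, (WithLp.equiv ⊤ (X × Y) z).2) - WithLp.equiv ⊤ (X × Y) z =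
        (w - (WithLp.equiv ⊤ (X × Y) z).1, (0 : Y))
      ext
      · rfl
      · exact sub_self _
    have hvmem : v ∈
        {u ∈ Metric.closedBall (0 : WithLp ⊤ (X × Y)) 1 |
          ∀ g ∈ F, |g u - g z| < δ} := by
      refine ⟨(memBallZ_iff _).2 ⟨hwB, hzC.2⟩, fun g hg => ?_⟩
      have h1 : g v - g z = (g.comp (inclZ (Y := Y))) w -
          (g.comp (inclZ (Y := Y))) ((WithLp.equiv ⊤ (X × Y) z).1) := by
        rw [← map_sub g, hvz]
        show g (inclZ (Y := Y) (w - (WithLp.equiv ⊤ (X × Y) z).1)) = _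
        rw [show (g.comp (inclZ (Y := Y))) w - (g.comp (inclZ (Y := Y)))
            ((WithLp.equiv ⊤ (X × Y) z).1) =
            (g.comp (inclZ (Y := Y))) (w - (WithLp.equiv ⊤ (X × Y) z).1) by
          rw [map_sub]]
        rfl
      rw [h1]
      exact hwF _ (Finset.mem_image_of_mem _ hg)
    exact (hsub hvmem).1
end
end

section
/- Let K be a locally compact Hausdorff topological space admitting a nonzero atomless regular finite Borel measure. Then there exists a finite convex combination of slices of the closed unit ball of C₀(K) (in fact, a half-sum of two slices) whose interior in the relative weak topology of the closed unit ball is empty. -/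
open scoped Pointwise

noncomputable section

open MeasureTheory ZeroAtInftyContinuousMap
open scoped ZeroAtInfty


section Aux




lemma extreme_kernel {N : ℕ} {ι : Type*} [Fintype ι]
    (T : (Fin N → ℝ) →ₗ[ℝ] (ι → ℝ)) :
    ∃ u : Fin N → ℝ, T u = 0 ∧ (∀ i, |u i| ≤ 1) ∧
      (Finset.univ.filter fun i => |u i| < 1).card ≤ Fintype.card ι := by
  suffices H : ∀ k : ℕ, ∀ u : Fin N → ℝ, T u = 0 → (∀ i, |u i| ≤ 1) →
      (Finset.univ.filter fun i => |u i| < 1).card ≤ k →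
      ∃ u' : Fin N → ℝ, T u' = 0 ∧ (∀ i, |u' i| ≤ 1) ∧
        (Finset.univ.filter fun i => |u' i| < 1).card ≤ Fintype.card ι by
    exact H N 0 (map_zero T) (by simp) (by simpa using (Finset.card_filter_le _ _).trans (by simp))
  intro k
  induction k with
  | zero =>
    intro u h0 h1 hc
    exact ⟨u, h0, h1, hc.trans (Nat.zero_le _)⟩
  | succ k ih =>
    intro u h0 h1 hc
    by_cases hd : (Finset.univ.filter fun i => |u i| < 1).card ≤ Fintype.card ι
    · exact ⟨u, h0, h1, hd⟩
    push_neg at hd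
    set s : Finset (Fin N) := Finset.univ.filter (fun i => |u i| < 1) with hs
    -- a nonzero kernel element supported on `s`
    let ext : ({x // x ∈ s} → ℝ) →ₗ[ℝ] (Fin N → ℝ) :=
      { toFun := fun v i => if h : i ∈ s then v ⟨i, h⟩ else 0
        map_add' := by intro a b; funext i; by_cases h : i ∈ s <;> simp [h]
        map_smul' := by intro c a; funext i; by_cases h : i ∈ s <;> simp [h] }
    have hninj : ¬ Function.Injective (T.comp ext) := by
      intro hinj
      have h2 := LinearMap.finrank_le_finrank_of_injective hinj
      rw [Module.finrank_fintype_fun_eq_card, Module.finrank_fintype_fun_eq_card,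
        Fintype.card_coe] at h2
      omega
    rw [← LinearMap.ker_eq_bot] at hninj
    obtain ⟨v₀, hv₀ker, hv₀ne⟩ := Submodule.ne_bot_iff _ |>.mp hninj
    have hv₀T : T (ext v₀) = 0 := hv₀ker
    set v : Fin N → ℝ := ext v₀ with hv
    have hvs : ∀ i, i ∉ s → v i = 0 := by
      intro i hi
      simp only [hv, ext, LinearMap.coe_mk, AddHom.coe_mk, dif_neg hi]
    obtain ⟨j, hj⟩ : ∃ j : {x // x ∈ s}, v₀ j ≠ 0 := by
      by_contra h
      push_neg at h
      exact hv₀ne (funext fun j => h j)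
    have hvj : v (j : Fin N) ≠ 0 := by
      simpa only [hv, ext, LinearMap.coe_mk, AddHom.coe_mk, dif_pos j.2] using hj
    set e : Fin N → ℝ := fun i => if 0 < v i then (1 - u i) / v i else (-1 - u i) / v i with he
    set supp : Finset (Fin N) := Finset.univ.filter (fun i => v i ≠ 0) with hsupp
    have hsuppne : supp.Nonempty := ⟨j, by simp [hsupp, hvj]⟩
    set t : ℝ := supp.inf' hsuppne e with hte
    have het : ∀ i ∈ supp, 0 ≤ e i := by
      intro i hi
      have hvi : v i ≠ 0 := by simpa [hsupp] using hi
      rcases lt_or_gt_of_ne hvi with hneg | hpos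
      · have : ¬ (0 < v i) := by linarith
        rw [he]; simp only [this, if_false]
        apply div_nonneg_iff.mpr
        right
        constructor
        · have := (abs_le.mp (h1 i)).1; linarith
        · linarith
      · rw [he]; simp only [hpos, if_true]
        apply div_nonneg _ (le_of_lt hpos)
        have := (abs_le.mp (h1 i)).2; linarith
    have ht0 : 0 ≤ t := Finset.le_inf' hsuppne e het
    set u' : Fin N → ℝ := u + t • v with hu'
    have hTu' : T u' = 0 := by
      rw [hu', map_add, _root_.map_smul, h0, hv₀T] ; simp
    have hb : ∀ i, |u' i| ≤ 1 := by
      intro i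
      rcases eq_or_ne (v i) 0 with hvi | hvi
      · simp [hu', hvi, h1 i]
      have hisupp : i ∈ supp := by simp [hsupp, hvi]
      have hti : t ≤ e i := Finset.inf'_le e hisupp
      rcases lt_or_gt_of_ne hvi with hneg | hpos
      · have hei : e i = (-1 - u i) / v i := by
          rw [he]; simp only [not_lt.mpr hneg.le, if_false]
        rw [abs_le]
        constructor
        · have : e i * v i ≤ t * v i := by
            exact mul_le_mul_of_nonpos_right hti hneg.le
          rw [hei, div_mul_cancel₀ _ hvi] at this
          simp only [hu', Pi.add_apply, Pi.smul_apply, smul_eq_mul]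
          linarith
        · have : t * v i ≤ 0 := mul_nonpos_of_nonneg_of_nonpos ht0 hneg.le
          have hui := (abs_le.mp (h1 i)).2
          simp only [hu', Pi.add_apply, Pi.smul_apply, smul_eq_mul]
          linarith
      · have hei : e i = (1 - u i) / v i := by rw [he]; simp only [hpos, if_true]
        rw [abs_le]
        constructor
        · have : 0 ≤ t * v i := mul_nonneg ht0 hpos.le
          have hui := (abs_le.mp (h1 i)).1
          simp only [hu', Pi.add_apply, Pi.smul_apply, smul_eq_mul]
          linarith
        · have : t * v i ≤ e i * v i := mul_le_mul_of_nonneg_right hti hpos.le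
          rw [hei, div_mul_cancel₀ _ hvi] at this
          simp only [hu', Pi.add_apply, Pi.smul_apply, smul_eq_mul]
          linarith
    obtain ⟨i₀, hi₀supp, hi₀⟩ := Finset.exists_mem_eq_inf' hsuppne e
    have hvi₀ : v i₀ ≠ 0 := by simpa [hsupp] using hi₀supp
    have hi₀full : |u' i₀| = 1 := by
      rcases lt_or_gt_of_ne hvi₀ with hneg | hpos
      · have hei : e i₀ = (-1 - u i₀) / v i₀ := by
          rw [he]; simp only [not_lt.mpr hneg.le, if_false]
        have hti₀ : t = e i₀ := hi₀
        have : u' i₀ = -1 := by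
          simp only [hu', Pi.add_apply, Pi.smul_apply, smul_eq_mul]
          rw [hti₀, hei, div_mul_cancel₀ _ hvi₀]
          ring
        rw [this]; simp
      · have hei : e i₀ = (1 - u i₀) / v i₀ := by rw [he]; simp only [hpos, if_true]
        have hti₀ : t = e i₀ := hi₀
        have : u' i₀ = 1 := by
          simp only [hu', Pi.add_apply, Pi.smul_apply, smul_eq_mul]
          rw [hti₀, hei, div_mul_cancel₀ _ hvi₀]
          ring
        rw [this]; simp
    have hi₀s : i₀ ∈ s := by
      by_contra h
      exact hvi₀ (hvs i₀ h)
    have hsub : (Finset.univ.filter fun i => |u' i| < 1) ⊆ s.erase i₀ := by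
      intro i hi
      simp only [Finset.mem_filter, Finset.mem_univ, true_and] at hi
      rw [Finset.mem_erase]
      constructor
      · rintro rfl; rw [hi₀full] at hi; exact lt_irrefl _ hi
      · by_contra h
        have hvi := hvs i h
        have : u' i = u i := by simp [hu', hvi]
        rw [this] at hi
        exact h (by simp [hs, hi])
    have hcard : (Finset.univ.filter fun i => |u' i| < 1).card ≤ k := by
      have h2 := Finset.card_le_card hsub
      rw [Finset.card_erase_of_mem hi₀s] at h2
      omega
    exact ih u' hTu' hb hcard



open MeasureTheory Set
open scoped ENNReal

variable {K : Type*} [MeasurableSpace K]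

lemma muHalfSub (μ : Measure K) [IsFiniteMeasure μ]
    (hat : ∀ E : Set K, MeasurableSet E → 0 < μ E →
      ∃ F ⊆ E, MeasurableSet F ∧ 0 < μ F ∧ μ F < μ E)
    {E : Set K} (hE : MeasurableSet E) (hE0 : 0 < μ E) :
    ∃ F ⊆ E, MeasurableSet F ∧ 0 < μ F ∧ 2 * μ F ≤ μ E := by
  obtain ⟨F, hFE, hFm, hF0, hFlt⟩ := hat E hE hE0
  rcases le_or_gt (2 * μ F) (μ E) with h | h
  · exact ⟨F, hFE, hFm, hF0, h⟩
  · have hdiff : μ (E \ F) = μ E - μ F := measure_diff hFE hFm.nullMeasurableSet (measure_ne_top μ F)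
    refine ⟨E \ F, diff_subset, hE.diff hFm, ?_, ?_⟩
    · rw [hdiff]
      exact tsub_pos_of_lt hFlt
    · rw [hdiff]
      have h1 : μ E - μ F ≤ μ F := by
        rw [tsub_le_iff_right, ← two_mul]
        exact h.le
      calc 2 * (μ E - μ F) = (μ E - μ F) + (μ E - μ F) := two_mul _
        _ ≤ (μ E - μ F) + μ F := add_le_add le_rfl h1
        _ = μ E := tsub_add_cancel_of_le (measure_mono hFE)

lemma small_sub_meas (μ : Measure K) [IsFiniteMeasure μ]
    (hat : ∀ E : Set K, MeasurableSet E → 0 < μ E →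
      ∃ F ⊆ E, MeasurableSet F ∧ 0 < μ F ∧ μ F < μ E)
    {E : Set K} (hE : MeasurableSet E) (hE0 : 0 < μ E) {η : ℝ≥0∞} (hη : 0 < η) :
    ∃ F ⊆ E, MeasurableSet F ∧ 0 < μ F ∧ μ F ≤ η := by
  have key : ∀ n : ℕ, ∃ F ⊆ E, MeasurableSet F ∧ 0 < μ F ∧ 2 ^ n * μ F ≤ μ E := by
    intro n
    induction n with
    | zero => exact ⟨E, Subset.rfl, hE, hE0, by simpa using le_rfl⟩
    | succ n ih =>
      obtain ⟨F, hFE, hFm, hF0, hFle⟩ := ih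
      obtain ⟨G, hGF, hGm, hG0, hGle⟩ := muHalfSub μ hat hFm hF0
      refine ⟨G, hGF.trans hFE, hGm, hG0, ?_⟩
      calc 2 ^ (n + 1) * μ G = 2 ^ n * (2 * μ G) := by ring
        _ ≤ 2 ^ n * μ F := by exact mul_le_mul_right hGle _
        _ ≤ μ E := hFle
  -- pick n with μ E ≤ 2 ^ n * η
  obtain ⟨n, hn⟩ : ∃ n : ℕ, μ E / η < 2 ^ n := by
    obtain ⟨m, hm⟩ := ENNReal.exists_nat_gt (show μ E / η ≠ ∞ from
      (ENNReal.div_lt_top (measure_ne_top μ E) hη.ne').ne)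
    exact ⟨m, hm.trans_le (by exact_mod_cast (Nat.lt_two_pow_self (n := m)).le)⟩
  obtain ⟨F, hFE, hFm, hF0, hFle⟩ := key n
  refine ⟨F, hFE, hFm, hF0, ?_⟩
  have h1 : μ E ≤ 2 ^ n * η := by
    rw [ENNReal.div_lt_iff (Or.inl hη.ne') (Or.inr (measure_ne_top μ E))] at hn
    exact hn.le
  have h2 : 2 ^ n * μ F ≤ 2 ^ n * η := hFle.trans h1
  exact (ENNReal.mul_le_mul_iff_right (a := 2 ^ n) (by positivity) (by simp)).mp h2

lemma chunk_sub (μ : Measure K) [IsFiniteMeasure μ]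
    (hat : ∀ E : Set K, MeasurableSet E → 0 < μ E →
      ∃ F ⊆ E, MeasurableSet F ∧ 0 < μ F ∧ μ F < μ E)
    {E : Set K} (hE : MeasurableSet E) {η : ℝ≥0∞} (hη : 0 < η) (hηt : η ≠ ∞)
    (hEη : η < μ E) :
    ∃ F ⊆ E, MeasurableSet F ∧ η / 2 < μ F ∧ μ F ≤ η := by
  classical
  have hη2lt : η / 2 < η := ENNReal.half_lt_self hη.ne' hηt
  have hη2pos : 0 < η / 2 := ENNReal.half_pos hη.ne'
  have hη2t : η / 2 ≠ ∞ := (ENNReal.div_lt_top hηt (by norm_num)).ne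
  have key : ∀ A : Set K, MeasurableSet A → μ A ≤ η / 2 →
      ∃ F, (F ⊆ E \ A ∧ MeasurableSet F ∧ μ F ≤ η / 2) ∧
        ∀ F', F' ⊆ E \ A → MeasurableSet F' → μ F' ≤ η / 2 → μ F' / 2 ≤ μ F := by
    intro A hA hAle
    have hEA0 : 0 < μ (E \ A) := by
      have h1 : μ E - μ A ≤ μ (E \ A) := le_measure_diff
      have h2 : 0 < μ E - μ A := tsub_pos_of_lt (lt_of_le_of_lt hAle (hη2lt.trans hEη))
      exact h2.trans_le h1
    set σ : ℝ≥0∞ := ⨆ (F : Set K) (_ : F ⊆ E \ A ∧ MeasurableSet F ∧ μ F ≤ η / 2), μ F with hσdef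
    obtain ⟨F₀, hF₀sub, hF₀m, hF₀0, hF₀le⟩ := small_sub_meas μ hat (hE.diff hA) hEA0 hη2pos
    have hσ0 : 0 < σ := lt_of_lt_of_le hF₀0 (le_iSup₂_of_le F₀ ⟨hF₀sub, hF₀m, hF₀le⟩ le_rfl)
    have hσle : σ ≤ η / 2 := iSup₂_le fun F hF => hF.2.2
    have hσhalf : σ / 2 < σ := ENNReal.half_lt_self hσ0.ne' (lt_of_le_of_lt (hσle.trans hη2lt.le) (lt_top_iff_ne_top.mpr hηt)).ne
    conv at hσhalf => rw [hσdef]; rw [lt_iSup_iff]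
    obtain ⟨F, hF⟩ := hσhalf
    rw [lt_iSup_iff] at hF
    obtain ⟨hFP, hFlt⟩ := hF
    refine ⟨F, hFP, ?_⟩
    intro F' h1 h2 h3
    have hF'σ : μ F' ≤ σ := le_iSup₂_of_le F' ⟨h1, h2, h3⟩ le_rfl
    calc μ F' / 2 ≤ σ / 2 := by gcongr
      _ ≤ μ F := hFlt.le
  let next : Set K → Set K := fun A =>
    if h : MeasurableSet A ∧ μ A ≤ η / 2 then A ∪ Classical.choose (key A h.1 h.2) else A
  let G : ℕ → Set K := fun n => next^[n] ∅
  have hGsucc : ∀ n, G (n + 1) = next (G n) := fun n => Function.iterate_succ_apply' next n ∅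
  have hGmeas_sub : ∀ n, MeasurableSet (G n) ∧ G n ⊆ E := by
    intro n
    induction n with
    | zero => exact ⟨MeasurableSet.empty, empty_subset E⟩
    | succ n ih =>
      rw [hGsucc]
      by_cases h : MeasurableSet (G n) ∧ μ (G n) ≤ η / 2
      · simp only [next, dif_pos h]
        obtain ⟨⟨hsub, hm, _⟩, _⟩ := Classical.choose_spec (key (G n) h.1 h.2)
        exact ⟨ih.1.union hm, union_subset ih.2 (hsub.trans diff_subset)⟩
      · simp only [next, dif_neg h]; exact ih
  by_cases hstop : ∃ n, ¬ μ (G n) ≤ η / 2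
  · have hGzero : μ (G 0) ≤ η / 2 := by
      show μ (next^[0] ∅) ≤ η / 2
      simp
    have hnpos : Nat.find hstop ≠ 0 := by
      intro h
      exact (h ▸ Nat.find_spec hstop) hGzero
    obtain ⟨m, hmeq⟩ := Nat.exists_eq_succ_of_ne_zero hnpos
    have hn : ¬ μ (G (m + 1)) ≤ η / 2 := by
      rw [show m + 1 = Nat.find hstop from hmeq.symm]
      exact Nat.find_spec hstop
    have hmle : μ (G m) ≤ η / 2 := by
      by_contra h
      exact Nat.find_min hstop (by omega) h
    have hcond : MeasurableSet (G m) ∧ μ (G m) ≤ η / 2 := ⟨(hGmeas_sub m).1, hmle⟩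
    have hGn : G (m + 1) = G m ∪ Classical.choose (key (G m) hcond.1 hcond.2) := by
      rw [hGsucc]
      simp only [next, dif_pos hcond]
    obtain ⟨⟨hsub, hm, hle⟩, -⟩ := Classical.choose_spec (key (G m) hcond.1 hcond.2)
    refine ⟨G (m + 1), (hGmeas_sub (m + 1)).2, (hGmeas_sub (m + 1)).1, not_le.mp hn, ?_⟩
    calc μ (G (m + 1)) ≤ μ (G m) + μ (Classical.choose (key (G m) hcond.1 hcond.2)) := by
          rw [hGn]; exact measure_union_le _ _
      _ ≤ η / 2 + η / 2 := add_le_add hmle hle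
      _ = η := ENNReal.add_halves η
  · push_neg at hstop
    exfalso
    have hmono : Monotone G := by
      apply monotone_nat_of_le_succ
      intro n
      rw [hGsucc]
      by_cases h : MeasurableSet (G n) ∧ μ (G n) ≤ η / 2
      · simp only [next, dif_pos h]; exact subset_union_left
      · simp only [next, dif_neg h]
        exact le_rfl
    set Ginf := ⋃ n, G n with hGinfdef
    have hGinfm : MeasurableSet Ginf := MeasurableSet.iUnion fun n => (hGmeas_sub n).1
    have hGinfle : μ Ginf ≤ η / 2 := by
      rw [hGinfdef, hmono.measure_iUnion]
      exact iSup_le hstop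
    have h0 : 0 < μ (E \ Ginf) := by
      have h1 : μ E - μ Ginf ≤ μ (E \ Ginf) := le_measure_diff
      have h2 : 0 < μ E - μ Ginf := tsub_pos_of_lt (lt_of_le_of_lt hGinfle (hη2lt.trans hEη))
      exact h2.trans_le h1
    obtain ⟨Fs, hFs_sub, hFs_m, hFs_0, hFs_le⟩ := small_sub_meas μ hat (hE.diff hGinfm) h0 hη2pos
    set c : ℝ≥0∞ := μ Fs / 2 with hcdef
    have hc0 : 0 < c := ENNReal.half_pos hFs_0.ne'
    have hct : c ≠ ∞ := (ENNReal.div_lt_top (measure_ne_top μ Fs) (by norm_num)).ne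
    have hgrow : ∀ n : ℕ, (n : ℝ≥0∞) * c ≤ μ (G n) := by
      intro n
      induction n with
      | zero => simp
      | succ n ih =>
        have hcond : MeasurableSet (G n) ∧ μ (G n) ≤ η / 2 := ⟨(hGmeas_sub n).1, hstop n⟩
        have hGn : G (n + 1) = G n ∪ Classical.choose (key (G n) hcond.1 hcond.2) := by
          rw [hGsucc]
          simp only [next, dif_pos hcond]
        obtain ⟨⟨hsub, hm, hle⟩, hmax⟩ := Classical.choose_spec (key (G n) hcond.1 hcond.2)
        set F := Classical.choose (key (G n) hcond.1 hcond.2)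
        have hdisj : Disjoint (G n) F := ((subset_diff.mp hsub).2).symm
        have hμU : μ (G n ∪ F) = μ (G n) + μ F := measure_union hdisj hm
        have hcF : c ≤ μ F := by
          apply hmax Fs _ hFs_m hFs_le
          exact hFs_sub.trans (diff_subset_diff_right (subset_iUnion G n))
        calc ((n + 1 : ℕ) : ℝ≥0∞) * c = (n : ℝ≥0∞) * c + c := by
              push_cast; ring
          _ ≤ μ (G n) + μ F := add_le_add ih hcF
          _ = μ (G (n + 1)) := by rw [hGn, hμU]
    obtain ⟨n, hn⟩ := ENNReal.exists_nat_gt (show (η / 2) / c ≠ ∞ from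
      (ENNReal.div_lt_top hη2t hc0.ne').ne)
    have h1 : (n : ℝ≥0∞) * c ≤ η / 2 := (hgrow n).trans (hstop n)
    have h2 : (n : ℝ≥0∞) ≤ (η / 2) / c :=
      (ENNReal.le_div_iff_mul_le (Or.inl hc0.ne') (Or.inl hct)).mpr h1
    exact absurd h2 (not_le.mpr hn)

lemma partition_small (μ : Measure K) [IsFiniteMeasure μ]
    (hat : ∀ E : Set K, MeasurableSet E → 0 < μ E →
      ∃ F ⊆ E, MeasurableSet F ∧ 0 < μ F ∧ μ F < μ E)
    {η : ℝ≥0∞} (hη : 0 < η) (hηt : η ≠ ∞) :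
    ∀ (m : ℕ) (E : Set K), MeasurableSet E → μ E ≤ m * (η / 2) →
    ∃ (n : ℕ) (S : Fin n → Set K), (∀ i, MeasurableSet (S i)) ∧
      (∀ i, μ (S i) ≤ η) ∧ Pairwise (Function.onFun Disjoint S) ∧ (⋃ i, S i) = E := by
  intro m
  induction m with
  | zero =>
    intro E hE hle
    refine ⟨1, fun _ => E, fun _ => hE, fun _ => ?_, Subsingleton.pairwise, iUnion_const E⟩
    simp only [Nat.cast_zero, zero_mul, nonpos_iff_eq_zero] at hle
    rw [hle]
    exact zero_le
  | succ m ih =>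
    intro E hE hle
    by_cases hEsmall : μ E ≤ η
    · exact ⟨1, fun _ => E, fun _ => hE, fun _ => hEsmall, Subsingleton.pairwise, iUnion_const E⟩
    push_neg at hEsmall
    obtain ⟨F, hFE, hFm, hFlt, hFle⟩ := chunk_sub μ hat hE hη hηt hEsmall
    have hE' : MeasurableSet (E \ F) := hE.diff hFm
    have hle' : μ (E \ F) ≤ m * (η / 2) := by
      rw [measure_diff hFE hFm.nullMeasurableSet (measure_ne_top μ F)]
      calc μ E - μ F ≤ ((m + 1 : ℕ) * (η / 2)) - (η / 2) := tsub_le_tsub hle hFlt.le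
        _ = m * (η / 2) := by
          rw [show ((m + 1 : ℕ) : ℝ≥0∞) * (η / 2) = m * (η / 2) + η / 2 by push_cast; ring]
          exact ENNReal.add_sub_cancel_right ((ENNReal.div_lt_top hηt (by norm_num)).ne)
    obtain ⟨n, S, hSm, hSle, hSdisj, hSun⟩ := ih (E \ F) hE' hle'
    refine ⟨n + 1, Fin.cons F S, ?_, ?_, ?_, ?_⟩
    · intro i
      refine Fin.cases ?_ ?_ i
      · exact hFm
      · intro j; exact hSm j
    · intro i
      refine Fin.cases ?_ ?_ i
      · exact hFle
      · intro j; exact hSle j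
    · have hdisjF : ∀ j, Disjoint F (S j) := by
        intro j
        have : S j ⊆ E \ F := hSun ▸ subset_iUnion S j
        exact (subset_diff.mp this).2.symm
      intro i j hij
      rcases Fin.eq_zero_or_eq_succ i with rfl | ⟨i', rfl⟩ <;>
        rcases Fin.eq_zero_or_eq_succ j with rfl | ⟨j', rfl⟩
      · exact absurd rfl hij
      · simpa [Function.onFun] using hdisjF j'
      · simpa [Function.onFun] using (hdisjF i').symm
      · have hij' : i' ≠ j' := fun h => hij (by rw [h])
        simpa [Function.onFun] using hSdisj hij'
    · have : (⋃ i, (Fin.cons F S : Fin (n + 1) → Set K) i) = F ∪ ⋃ i, S i := by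
        ext x
        simp only [mem_iUnion, mem_union, Fin.exists_fin_succ, Fin.cons_zero, Fin.cons_succ]
      rw [this, hSun, union_diff_cancel hFE]

end Aux

section Dual

open MeasureTheory

variable {K : Type*} [TopologicalSpace K] [MeasurableSpace K] [BorelSpace K]

lemma c0_integrable (μ : Measure K) [IsFiniteMeasure μ] (g : C₀(K, ℝ)) :
    Integrable g μ :=
  g.toBCF.integrable μ

lemma c0_abs_le_norm (g : C₀(K, ℝ)) (x : K) : |g x| ≤ ‖g‖ := by
  have h := g.toBCF.norm_coe_le_norm x
  rwa [ZeroAtInftyContinuousMap.norm_toBCF_eq_norm] at h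

def muDual (μ : Measure K) [IsFiniteMeasure μ] : StrongDual ℝ C₀(K, ℝ) :=
  LinearMap.mkContinuous
    { toFun := fun g => (∫ x, g x ∂μ) / (μ Set.univ).toReal
      map_add' := fun g h => by
        simp only [ZeroAtInftyContinuousMap.coe_add, Pi.add_apply]
        rw [integral_add (c0_integrable μ g) (c0_integrable μ h)]
        ring
      map_smul' := fun c g => by
        simp only [ZeroAtInftyContinuousMap.coe_smul, Pi.smul_apply, smul_eq_mul,
          RingHom.id_apply]
        rw [integral_const_mul]
        ring }
    1
    (fun g => by
      simp only [LinearMap.coe_mk, AddHom.coe_mk, one_mul]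
      rcases le_or_gt (μ Set.univ).toReal 0 with hM | hM
      · have : (μ Set.univ).toReal = 0 := le_antisymm hM ENNReal.toReal_nonneg
        rw [this, div_zero, norm_zero]
        exact norm_nonneg g
      · rw [Real.norm_eq_abs, abs_div, abs_of_pos hM, div_le_iff₀ hM]
        have h := g.toBCF.norm_integral_le_mul_norm μ
        rw [ZeroAtInftyContinuousMap.norm_toBCF_eq_norm] at h
        calc |∫ x, g x ∂μ| ≤ (μ Set.univ).toReal * ‖g‖ := h
          _ = ‖g‖ * (μ Set.univ).toReal := by ring)

lemma muDual_apply (μ : Measure K) [IsFiniteMeasure μ] (g : C₀(K, ℝ)) :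
    muDual μ g = (∫ x, g x ∂μ) / (μ Set.univ).toReal := rfl

lemma muDual_norm [LocallyCompactSpace K] [T2Space K] (μ : Measure K) [IsFiniteMeasure μ]
    [μ.Regular] (hM : 0 < (μ Set.univ).toReal) : ‖muDual μ‖ = 1 := by
  refine le_antisymm (LinearMap.mkContinuous_norm_le _ zero_le_one _) ?_
  refine le_of_forall_sub_le ?_
  intro ε hε
  set M := (μ Set.univ).toReal with hMdef
  have hε' : (ENNReal.ofReal (ε * M)) ≠ 0 := by
    simp only [ne_eq, ENNReal.ofReal_eq_zero, not_le]
    positivity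
  obtain ⟨Q, -, hQc, hQlt⟩ :=
    MeasurableSet.univ.exists_isCompact_lt_add (μ := μ) (measure_ne_top μ _) hε'
  obtain ⟨f, hf1, -, hfc, hficc⟩ :=
    exists_continuous_one_zero_of_isCompact hQc isClosed_empty (Set.disjoint_empty _)
  set g : C₀(K, ℝ) := ⟨f, hfc.is_zero_at_infty⟩ with hgdef
  have hgapp : ∀ x, g x = f x := fun x => rfl
  have hgnorm : ‖g‖ ≤ 1 := by
    rw [← ZeroAtInftyContinuousMap.norm_toBCF_eq_norm]
    apply (BoundedContinuousFunction.norm_le zero_le_one).mpr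
    intro x
    have h := hficc x
    rw [Real.norm_eq_abs]
    have : g.toBCF x = f x := rfl
    rw [this]
    exact abs_le.mpr ⟨by linarith [h.1], h.2⟩
  have hgint : (μ Q).toReal ≤ ∫ x, g x ∂μ := by
    have h1 : ∫ x in Q, g x ∂μ = (μ Q).toReal := by
      calc ∫ x in Q, g x ∂μ = ∫ _ in Q, (1 : ℝ) ∂μ :=
            MeasureTheory.setIntegral_congr_fun hQc.measurableSet (fun x hx => hf1 hx)
        _ = (μ Q).toReal := by simp [measureReal_def]
    rw [← h1]
    apply MeasureTheory.setIntegral_le_integral (c0_integrable μ g)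
    filter_upwards with x
    rw [hgapp]
    exact (hficc x).1
  have hμQ : M - ε * M ≤ (μ Q).toReal := by
    have h2 : μ Set.univ ≤ μ Q + ENNReal.ofReal (ε * M) := hQlt.le
    have h3 : M ≤ (μ Q).toReal + ε * M := by
      have := ENNReal.toReal_mono (by finiteness) h2
      rwa [ENNReal.toReal_add (measure_ne_top μ Q) (by finiteness),
        ENNReal.toReal_ofReal (by positivity)] at this
    linarith
  have happ : 1 - ε ≤ muDual μ g := by
    rw [muDual_apply]
    rw [le_div_iff₀ hM]
    nlinarith [hgint, hμQ]
  calc 1 - ε ≤ muDual μ g := happ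
    _ ≤ |muDual μ g| := le_abs_self _
    _ ≤ ‖muDual μ‖ * ‖g‖ := (muDual μ).le_opNorm g
    _ ≤ ‖muDual μ‖ * 1 := by
        apply mul_le_mul_of_nonneg_left hgnorm (ContinuousLinearMap.opNorm_nonneg _)
    _ = ‖muDual μ‖ := mul_one _

end Dual

section MainAux

open MeasureTheory

variable {K : Type*} [TopologicalSpace K] [MeasurableSpace K] [BorelSpace K]

lemma memC_bound (μ : Measure K) [IsFiniteMeasure μ]
    (hM : 0 < (μ Set.univ).toReal) {w : C₀(K, ℝ)}
    (hw : w ∈ (2⁻¹ : ℝ) • ballSlice C₀(K, ℝ) (muDual μ) 4⁻¹ +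
          (2⁻¹ : ℝ) • ballSlice C₀(K, ℝ) (-(muDual μ)) 4⁻¹) :
    ‖w‖ ≤ 1 ∧ ∫ x, |w x| ∂μ < 4⁻¹ * (μ Set.univ).toReal := by
  set M := (μ Set.univ).toReal with hMdef
  obtain ⟨a, ha, b, hb, hab⟩ := Set.mem_add.mp hw
  obtain ⟨g₁, hg₁, rfl⟩ := Set.mem_smul_set.mp ha
  obtain ⟨g₂, hg₂, rfl⟩ := Set.mem_smul_set.mp hb
  obtain ⟨hg₁ball, hg₁sl⟩ := hg₁
  obtain ⟨hg₂ball, hg₂sl⟩ := hg₂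
  rw [Metric.mem_closedBall, dist_zero_right] at hg₁ball hg₂ball
  have pg1 : ∀ x, |g₁ x| ≤ 1 := fun x => (c0_abs_le_norm g₁ x).trans hg₁ball
  have pg2 : ∀ x, |g₂ x| ≤ 1 := fun x => (c0_abs_le_norm g₂ x).trans hg₂ball
  have hwnorm : ‖w‖ ≤ 1 := by
    rw [← hab]
    calc ‖(2⁻¹ : ℝ) • g₁ + (2⁻¹ : ℝ) • g₂‖ ≤ ‖(2⁻¹ : ℝ) • g₁‖ + ‖(2⁻¹ : ℝ) • g₂‖ :=
          norm_add_le _ _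
      _ = 2⁻¹ * ‖g₁‖ + 2⁻¹ * ‖g₂‖ := by
          rw [norm_smul (2⁻¹ : ℝ) g₁, norm_smul (2⁻¹ : ℝ) g₂]
          norm_num
      _ ≤ 1 := by linarith
  refine ⟨hwnorm, ?_⟩
  have hwx : ∀ x, w x = 2⁻¹ * g₁ x + 2⁻¹ * g₂ x := by
    intro x
    rw [← hab]
    simp [ZeroAtInftyContinuousMap.coe_add, ZeroAtInftyContinuousMap.coe_smul]
  have h1 : (3 : ℝ)/4 * M < ∫ x, g₁ x ∂μ := by
    have := hg₁sl
    rw [muDual_apply] at this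
    rw [show (1 : ℝ) - 4⁻¹ = 3/4 by norm_num] at this
    rw [lt_div_iff₀ hM] at this
    linarith [this]
  have h2 : ∫ x, g₂ x ∂μ < -(3/4) * M := by
    have h3 := hg₂sl
    rw [ContinuousLinearMap.neg_apply, muDual_apply] at h3
    rw [show (1 : ℝ) - 4⁻¹ = 3/4 by norm_num] at h3
    rw [lt_neg] at h3
    rw [div_lt_iff₀ hM] at h3
    linarith
  have hpt : ∀ x, g₁ x - g₂ x ≤ 2 - 2 * |w x| := by
    intro x
    have e := hwx x
    have a1 := abs_le.mp (pg1 x)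
    have a2 := abs_le.mp (pg2 x)
    rcases abs_cases (w x) with ⟨h, _⟩ | ⟨h, _⟩ <;> rw [h] <;> linarith
  have hint : ∫ x, (g₁ x - g₂ x) ∂μ ≤ ∫ x, (2 - 2 * |w x|) ∂μ := by
    apply integral_mono ((c0_integrable μ g₁).sub (c0_integrable μ g₂))
      ((integrable_const 2).sub (((c0_integrable μ w).abs).const_mul 2)) hpt
  rw [integral_sub (c0_integrable μ g₁) (c0_integrable μ g₂),
    integral_sub (integrable_const 2) (((c0_integrable μ w).abs).const_mul 2),
    integral_const, integral_const_mul] at hint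
  simp only [smul_eq_mul, measureReal_def, ← hMdef] at hint
  linarith

end MainAux

section MainThm

open MeasureTheory
open scoped ENNReal

set_option maxHeartbeats 4000000 in
/-- If the locally compact Hausdorff space `K` carries a nonzero
atomless regular finite Borel measure, then the closed unit ball of `C₀(K)` admits a
half-sum of two slices whose interior in the relative weak topology of the closed
unit ball is empty. -/
theorem exists_half_sum_slices_empty_relWeak_interior_C0
    {K : Type*} [TopologicalSpace K] [LocallyCompactSpace K] [T2Space K]
    [MeasurableSpace K] [BorelSpace K]
    (μ : Measure K) (hμ0 : μ ≠ 0) [IsFiniteMeasure μ] [μ.Regular]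
    (hatomless : ∀ E : Set K, MeasurableSet E → 0 < μ E →
      ∃ F ⊆ E, MeasurableSet F ∧ 0 < μ F ∧ μ F < μ E) :
    ∃ (f₁ f₂ : StrongDual ℝ C₀(K, ℝ)) (α₁ α₂ : ℝ),
      ‖f₁‖ = 1 ∧ ‖f₂‖ = 1 ∧ 0 < α₁ ∧ 0 < α₂ ∧
      ¬ ∃ z ∈ (2⁻¹ : ℝ) • ballSlice C₀(K, ℝ) f₁ α₁ +
            (2⁻¹ : ℝ) • ballSlice C₀(K, ℝ) f₂ α₂,
          RelWeakInteriorPt C₀(K, ℝ)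
            ((2⁻¹ : ℝ) • ballSlice C₀(K, ℝ) f₁ α₁ +
              (2⁻¹ : ℝ) • ballSlice C₀(K, ℝ) f₂ α₂) z := by
  classical
  set M := (μ Set.univ).toReal with hMdef
  have hM : 0 < M := by
    rw [hMdef]
    apply ENNReal.toReal_pos _ (measure_ne_top μ _)
    exact (Measure.measure_univ_ne_zero).mpr hμ0
  have hnorm1 : ‖muDual μ‖ = 1 := muDual_norm μ hM
  refine ⟨muDual μ, -(muDual μ), 4⁻¹, 4⁻¹, hnorm1, by rw [ContinuousLinearMap.opNorm_neg]; exact hnorm1,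
    by norm_num, by norm_num, ?_⟩
  rintro ⟨z, hzC, Fs, δ, hδ, hsub⟩
  obtain ⟨hznorm, hzint⟩ := memC_bound μ hM hzC
  have hz1 : ∀ x, |z x| ≤ 1 := fun x => (c0_abs_le_norm z x).trans hznorm
  set d := Fs.card with hddef
  -- partition of K into small measurable pieces
  set η : ℝ≥0∞ := μ Set.univ / ((8 * (d + 1) : ℕ) : ℝ≥0∞) with hηdef
  have hdenom0 : ((8 * (d + 1) : ℕ) : ℝ≥0∞) ≠ 0 := by
    simp
  have hdenomt : ((8 * (d + 1) : ℕ) : ℝ≥0∞) ≠ ∞ := ENNReal.natCast_ne_top _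
  have hη0 : 0 < η := ENNReal.div_pos ((Measure.measure_univ_ne_zero).mpr hμ0) hdenomt
  have hηt : η ≠ ∞ := (ENNReal.div_lt_top (measure_ne_top μ _) hdenom0).ne
  obtain ⟨m, hm⟩ : ∃ m : ℕ, μ Set.univ ≤ m * (η / 2) := by
    have hη20 : (0:ℝ≥0∞) < η / 2 := ENNReal.half_pos hη0.ne'
    obtain ⟨m, hm⟩ := ENNReal.exists_nat_gt (show μ Set.univ / (η / 2) ≠ ∞ from
      (ENNReal.div_lt_top (measure_ne_top μ _) hη20.ne').ne)
    refine ⟨m, ?_⟩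
    rw [ENNReal.div_lt_iff (Or.inl hη20.ne') (Or.inr (measure_ne_top μ _))] at hm
    exact hm.le
  obtain ⟨n, S, hSm, hSle, hSdisj, hSun⟩ :=
    partition_small μ hatomless hη0 hηt m Set.univ MeasurableSet.univ hm
  have hn0 : n ≠ 0 := by
    intro h
    subst h
    rw [Set.iUnion_of_empty] at hSun
    have h0 : μ Set.univ = 0 := by rw [← hSun]; simp
    rw [hMdef, h0] at hM
    simp at hM
  -- inner regular compact subsets
  set ε : ℝ≥0∞ := μ Set.univ / ((8 * n : ℕ) : ℝ≥0∞) with hεdef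
  have hεd0 : ((8 * n : ℕ) : ℝ≥0∞) ≠ 0 := by
    simpa using hn0
  have hε0 : 0 < ε := ENNReal.div_pos ((Measure.measure_univ_ne_zero).mpr hμ0)
    (ENNReal.natCast_ne_top _)
  have hεt : ε ≠ ∞ := (ENNReal.div_lt_top (measure_ne_top μ _) hεd0).ne
  have hLex : ∀ i : Fin n, ∃ L, L ⊆ S i ∧ IsCompact L ∧ μ (S i) < μ L + ε := by
    intro i
    obtain ⟨L, h1, h2, h3⟩ := (hSm i).exists_isCompact_lt_add (measure_ne_top μ _) hε0.ne'
    exact ⟨L, h1, h2, h3⟩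
  choose L hLsub hLc hLlt using hLex
  have hLm : ∀ i, MeasurableSet (L i) := fun i => (hLc i).isClosed.measurableSet
  have hLdisj : Pairwise (Function.onFun Disjoint L) := fun i j hij =>
    Set.disjoint_of_subset (hLsub i) (hLsub j) (hSdisj hij)
  -- Urysohn bump functions
  have hcl : ∀ i : Fin n, IsClosed (⋃ j ∈ Finset.univ.erase i, L j) :=
    fun i => isClosed_biUnion_finset (fun j _ => (hLc j).isClosed)
  have hdisjU : ∀ i : Fin n, Disjoint (L i) (⋃ j ∈ Finset.univ.erase i, L j) := by
    intro i
    rw [Set.disjoint_iUnion₂_right]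
    intro j hj
    exact hLdisj (Finset.ne_of_mem_erase hj).symm
  choose φ hφ1 hφ0 hφc hφicc using fun i : Fin n =>
    exists_continuous_one_zero_of_isCompact (hLc i) (hcl i) (hdisjU i)
  set ψ : Fin n → K → ℝ := fun i x => max (φ i x - ∑ j ∈ Finset.univ.erase i, φ j x) 0
    with hψdef
  have hψcont : ∀ i, Continuous (ψ i) := by
    intro i
    exact ((φ i).continuous.sub (continuous_finset_sum _ fun j _ => (φ j).continuous)).max
      continuous_const
  have hψnn : ∀ i x, 0 ≤ ψ i x := fun i x => le_max_right _ _
  have hψleφ : ∀ i x, ψ i x ≤ φ i x := by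
    intro i x
    apply max_le _ ((hφicc i x).1)
    have : (0:ℝ) ≤ ∑ j ∈ Finset.univ.erase i, φ j x :=
      Finset.sum_nonneg fun j _ => (hφicc j _).1
    linarith
  have hψ1 : ∀ i, ∀ x ∈ L i, ψ i x = 1 := by
    intro i x hx
    have h1 : φ i x = 1 := hφ1 i hx
    have h0 : ∀ j ∈ Finset.univ.erase i, φ j x = 0 := by
      intro j hj
      apply hφ0 j
      exact Set.mem_biUnion (Finset.mem_erase.mpr ⟨(Finset.ne_of_mem_erase hj).symm,
        Finset.mem_univ i⟩) hx
    rw [hψdef]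
    simp only [Finset.sum_eq_zero h0, h1]
    norm_num
  have hψvanish : ∀ i j, j ≠ i → ∀ x ∈ L j, ψ i x = 0 := by
    intro i j hj x hx
    have h1 : φ i x = 0 := by
      apply hφ0 i
      exact Set.mem_biUnion (Finset.mem_erase.mpr ⟨hj, Finset.mem_univ j⟩) hx
    have h2 : (0:ℝ) ≤ ∑ k ∈ Finset.univ.erase i, φ k x :=
      Finset.sum_nonneg fun k _ => (hφicc k _).1
    rw [hψdef]
    simp only
    rw [h1]
    rw [max_eq_right (by linarith)]
  have hψsum : ∀ x, ∑ i, ψ i x ≤ 1 := by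
    intro x
    by_cases hex : ∃ i, 0 < ψ i x
    · obtain ⟨i₀, hi₀⟩ := hex
      have hpos : 0 < φ i₀ x - ∑ j ∈ Finset.univ.erase i₀, φ j x := by
        by_contra h
        push_neg at h
        rw [hψdef] at hi₀
        simp only at hi₀
        rw [max_eq_right h] at hi₀
        exact lt_irrefl _ hi₀
      have hzero : ∀ j, j ≠ i₀ → ψ j x = 0 := by
        intro j hj
        have ha : φ i₀ x ≤ ∑ k ∈ Finset.univ.erase j, φ k x :=
          Finset.single_le_sum (fun k _ => (hφicc k _).1)
            (Finset.mem_erase.mpr ⟨hj.symm, Finset.mem_univ _⟩)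
        have hb : φ j x ≤ ∑ k ∈ Finset.univ.erase i₀, φ k x :=
          Finset.single_le_sum (fun k _ => (hφicc k _).1)
            (Finset.mem_erase.mpr ⟨hj, Finset.mem_univ _⟩)
        rw [hψdef]
        simp only
        rw [max_eq_right (by linarith)]
      calc ∑ i, ψ i x = ψ i₀ x := Finset.sum_eq_single i₀ (fun j _ hj => hzero j hj)
            (fun h => absurd (Finset.mem_univ i₀) h)
        _ ≤ φ i₀ x := hψleφ i₀ x
        _ ≤ 1 := (hφicc i₀ x).2
    · push_neg at hex
      have : ∑ i, ψ i x ≤ 0 := Finset.sum_nonpos fun i _ => hex i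
      linarith
  have hψhcs : ∀ i, HasCompactSupport (ψ i) := by
    intro i
    apply HasCompactSupport.intro (hφc i)
    intro x hx
    have h1 : φ i x = 0 := image_eq_zero_of_notMem_tsupport hx
    have h2 : (0:ℝ) ≤ ∑ k ∈ Finset.univ.erase i, φ k x :=
      Finset.sum_nonneg fun k _ => (hφicc k _).1
    rw [hψdef]
    simp only
    rw [h1, max_eq_right (by linarith)]
  -- the perturbation directions in C₀
  have hgzero : ∀ i : Fin n, Filter.Tendsto (fun x => ψ i x * (1 - |z x|))
      (Filter.cocompact K) (nhds 0) := by
    intro i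
    exact HasCompactSupport.is_zero_at_infty ((hψhcs i).mul_right)
  set g : Fin n → C₀(K, ℝ) := fun i =>
    ⟨⟨fun x => ψ i x * (1 - |z x|),
      (hψcont i).mul (continuous_const.sub ((map_continuous z).abs))⟩, hgzero i⟩ with hgdef
  have hgapp : ∀ i x, g i x = ψ i x * (1 - |z x|) := fun i x => rfl
  -- the linear constraint map and an extreme kernel point
  set T : (Fin n → ℝ) →ₗ[ℝ] ({f // f ∈ Fs} → ℝ) :=
    { toFun := fun u lam => ∑ i, u i * (lam.1 (g i))
      map_add' := fun a b => by
        funext lam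
        simp only [Pi.add_apply, add_mul, Finset.sum_add_distrib]
      map_smul' := fun c a => by
        funext lam
        simp only [Pi.smul_apply, smul_eq_mul, RingHom.id_apply, Finset.mul_sum, mul_assoc] }
    with hTdef
  obtain ⟨u, huT, hub, hucard⟩ := extreme_kernel T
  rw [Fintype.card_coe] at hucard
  set w : C₀(K, ℝ) := z + ∑ i, u i • g i with hwdef
  have hsum_apply : ∀ x, (∑ i, u i • g i) x = ∑ i, u i * g i x := by
    intro x
    let ev : C₀(K, ℝ) →+ ℝ :=
      AddMonoidHom.mk' (fun h => h x) (fun a b => by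
        simp [ZeroAtInftyContinuousMap.coe_add])
    calc (∑ i, u i • g i) x = ev (∑ i, u i • g i) := rfl
      _ = ∑ i, ev (u i • g i) := map_sum ev _ _
      _ = ∑ i, u i * g i x := rfl
  have hwapp : ∀ x, w x = z x + ∑ i, u i * (ψ i x * (1 - |z x|)) := by
    intro x
    rw [hwdef]
    have : (z + ∑ i, u i • g i) x = z x + (∑ i, u i • g i) x := rfl
    rw [this, hsum_apply]
    rfl
  -- w is in the closed unit ball
  have habs : ∀ x, |∑ i, u i * ψ i x| ≤ 1 := by
    intro x
    calc |∑ i, u i * ψ i x| ≤ ∑ i, |u i * ψ i x| := Finset.abs_sum_le_sum_abs _ _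
      _ ≤ ∑ i, ψ i x := by
          apply Finset.sum_le_sum
          intro i _
          rw [abs_mul, abs_of_nonneg (hψnn i x)]
          calc |u i| * ψ i x ≤ 1 * ψ i x :=
                mul_le_mul_of_nonneg_right (hub i) (hψnn i x)
            _ = ψ i x := one_mul _
      _ ≤ 1 := hψsum x
  have hwnorm : ‖w‖ ≤ 1 := by
    rw [← ZeroAtInftyContinuousMap.norm_toBCF_eq_norm]
    apply (BoundedContinuousFunction.norm_le zero_le_one).mpr
    intro x
    have hx : w.toBCF x = w x := rfl
    rw [hx, Real.norm_eq_abs]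
    have e := hwapp x
    have hsfac : ∑ i, u i * (ψ i x * (1 - |z x|)) = (∑ i, u i * ψ i x) * (1 - |z x|) := by
      rw [Finset.sum_mul]
      apply Finset.sum_congr rfl
      intro i _
      ring
    rw [e, hsfac]
    have h1 := habs x
    have h2 := hz1 x
    have h3 : |(∑ i, u i * ψ i x) * (1 - |z x|)| = |∑ i, u i * ψ i x| * (1 - |z x|) := by
      rw [abs_mul, abs_of_nonneg (by linarith : (0:ℝ) ≤ 1 - |z x|)]
    calc |z x + (∑ i, u i * ψ i x) * (1 - |z x|)|
        ≤ |z x| + |(∑ i, u i * ψ i x) * (1 - |z x|)| := abs_add_le _ _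
      _ = |z x| + |∑ i, u i * ψ i x| * (1 - |z x|) := by rw [h3]
      _ ≤ |z x| + 1 * (1 - |z x|) := by
          have := mul_le_mul_of_nonneg_right h1 (by linarith : (0:ℝ) ≤ 1 - |z x|)
          linarith
      _ ≤ 1 := by linarith
  have hwsub : w - z = ∑ i, u i • g i := by
    rw [hwdef]
    abel
  have hwmem : w ∈ {v : C₀(K, ℝ) | v ∈ Metric.closedBall 0 1 ∧ ∀ f ∈ Fs, |f v - f z| < δ} := by
    refine ⟨?_, ?_⟩
    · rw [Metric.mem_closedBall, dist_zero_right]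
      exact hwnorm
    · intro f hf
      have h1 : f w - f z = f (w - z) := (map_sub f w z).symm
      have h2 : f (w - z) = ∑ i, u i * f (g i) := by
        rw [hwsub, map_sum]
        apply Finset.sum_congr rfl
        intro i _
        rw [_root_.map_smul]
        rfl
      have h3 : ∑ i, u i * f (g i) = 0 := congrFun huT ⟨f, hf⟩
      rw [h1, h2, h3, abs_zero]
      exact hδ
  have hwC := hsub hwmem
  obtain ⟨-, hwint⟩ := memC_bound μ hM hwC
  -- lower bound for the integral of |w|
  set full : Finset (Fin n) := Finset.univ.filter (fun i => ¬ |u i| < 1) with hfulldef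
  have hfull1 : ∀ i ∈ full, |u i| = 1 := by
    intro i hi
    rw [hfulldef, Finset.mem_filter] at hi
    exact le_antisymm (hub i) (not_lt.mp hi.2)
  have hptw : ∀ i ∈ full, ∀ x ∈ L i, 1 - 2 * |z x| ≤ |w x| := by
    intro i hi x hx
    have e := hwapp x
    have hcollapse : ∑ j, u j * (ψ j x * (1 - |z x|)) = u i * (1 - |z x|) := by
      rw [Finset.sum_eq_single i]
      · rw [hψ1 i x hx, one_mul]
      · intro j _ hj
        rw [hψvanish j i (Ne.symm hj) x hx]
        ring
      · intro h
        exact absurd (Finset.mem_univ i) h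
    have hz1x := hz1 x
    have habs1 : |u i * (1 - |z x|)| = 1 - |z x| := by
      rw [abs_mul, hfull1 i hi, one_mul, abs_of_nonneg (by linarith)]
    have tri := abs_add_le (z x + u i * (1 - |z x|)) (-(z x))
    have heq : z x + u i * (1 - |z x|) + -(z x) = u i * (1 - |z x|) := by ring
    rw [heq, habs1, abs_neg] at tri
    rw [e, hcollapse]
    linarith
  have hwInt : Integrable (fun x => |w x|) μ := (c0_integrable μ w).abs
  have hzInt : Integrable (fun x => |z x|) μ := (c0_integrable μ z).abs
  have hchain1 : ∫ x in (⋃ i ∈ full, L i), |w x| ∂μ ≤ ∫ x, |w x| ∂μ :=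
    setIntegral_le_integral hwInt (Filter.Eventually.of_forall fun x => abs_nonneg _)
  have hPW : Set.Pairwise ↑full (Function.onFun Disjoint L) := fun i _ j _ hij => hLdisj hij
  have hchain2 : ∫ x in (⋃ i ∈ full, L i), |w x| ∂μ = ∑ i ∈ full, ∫ x in L i, |w x| ∂μ :=
    integral_biUnion_finset full (fun i _ => hLm i) hPW (fun i _ => hwInt.integrableOn)
  have hchain2z : ∫ x in (⋃ i ∈ full, L i), |z x| ∂μ = ∑ i ∈ full, ∫ x in L i, |z x| ∂μ :=
    integral_biUnion_finset full (fun i _ => hLm i) hPW (fun i _ => hzInt.integrableOn)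
  have hchain3 : ∀ i ∈ full,
      (μ (L i)).toReal - 2 * ∫ x in L i, |z x| ∂μ ≤ ∫ x in L i, |w x| ∂μ := by
    intro i hi
    have hmono : ∫ x in L i, (1 - 2 * |z x|) ∂μ ≤ ∫ x in L i, |w x| ∂μ := by
      apply setIntegral_mono_on
        (((integrable_const (1:ℝ)).sub (hzInt.const_mul 2)).integrableOn)
        hwInt.integrableOn (hLm i)
      intro x hx
      exact hptw i hi x hx
    have hcomp : ∫ x in L i, (1 - 2 * |z x|) ∂μ
        = (μ (L i)).toReal - 2 * ∫ x in L i, |z x| ∂μ := by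
      rw [integral_sub (integrable_const (1:ℝ))
        ((hzInt.const_mul 2).integrableOn), setIntegral_const, integral_const_mul]
      simp [measureReal_def]
    linarith [hmono, hcomp.symm.le]
  have hsumz : ∑ i ∈ full, ∫ x in L i, |z x| ∂μ ≤ ∫ x, |z x| ∂μ := by
    rw [← hchain2z]
    exact setIntegral_le_integral hzInt (Filter.Eventually.of_forall fun x => abs_nonneg _)
  -- measure arithmetic
  have hεval : ε.toReal = M / (8 * (n:ℝ)) := by
    rw [hεdef, ENNReal.toReal_div, hMdef]
    congr 1
    rw [ENNReal.toReal_natCast]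
    push_cast
    ring
  have hηval : η.toReal = M / (8 * ((d:ℝ) + 1)) := by
    rw [hηdef, ENNReal.toReal_div, hMdef]
    congr 1
    rw [ENNReal.toReal_natCast]
    push_cast
    ring
  have hLS : ∀ i, (μ (S i)).toReal ≤ (μ (L i)).toReal + ε.toReal := by
    intro i
    have h := (hLlt i).le
    have h2 := ENNReal.toReal_mono (by finiteness) h
    rwa [ENNReal.toReal_add (measure_ne_top μ _) hεt] at h2
  have hsumS : ∑ i, (μ (S i)).toReal = M := by
    have h1 : ∑ i, μ (S i) = μ Set.univ := by
      rw [← hSun]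
      rw [← measure_biUnion_finset (fun i _ j _ hij => hSdisj hij) (fun i _ => hSm i)]
      congr 1
      simp
    rw [hMdef, ← h1, ENNReal.toReal_sum (fun i _ => measure_ne_top μ _)]
  have hLuniv : M - M / 8 ≤ ∑ i, (μ (L i)).toReal := by
    have h1 : ∑ i, (μ (S i)).toReal ≤ ∑ i, ((μ (L i)).toReal + ε.toReal) :=
      Finset.sum_le_sum (fun i _ => hLS i)
    rw [Finset.sum_add_distrib, Finset.sum_const, Finset.card_univ, Fintype.card_fin,
      nsmul_eq_mul] at h1
    have h2 : (n : ℝ) * ε.toReal = M / 8 := by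
      rw [hεval]
      have hn : (n : ℝ) ≠ 0 := Nat.cast_ne_zero.mpr hn0
      field_simp
    rw [hsumS, h2] at h1
    linarith
  have hμLle : ∀ i, (μ (L i)).toReal ≤ η.toReal := fun i =>
    ENNReal.toReal_mono hηt ((measure_mono (hLsub i)).trans (hSle i))
  have hfreesum : ∑ i ∈ Finset.univ.filter (fun i => |u i| < 1), (μ (L i)).toReal
      ≤ (d:ℝ) * η.toReal := by
    calc ∑ i ∈ Finset.univ.filter (fun i => |u i| < 1), (μ (L i)).toReal
        ≤ (Finset.univ.filter (fun i => |u i| < 1)).card • η.toReal :=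
          Finset.sum_le_card_nsmul _ _ _ (fun i _ => hμLle i)
      _ = ((Finset.univ.filter (fun i => |u i| < 1)).card : ℝ) * η.toReal := nsmul_eq_mul _ _
      _ ≤ (d:ℝ) * η.toReal := by
          apply mul_le_mul_of_nonneg_right _ ENNReal.toReal_nonneg
          exact_mod_cast hucard
  have hsplit : ∑ i ∈ Finset.univ.filter (fun i => |u i| < 1), (μ (L i)).toReal
      + ∑ i ∈ full, (μ (L i)).toReal = ∑ i, (μ (L i)).toReal := by
    rw [hfulldef]
    exact Finset.sum_filter_add_sum_filter_not _ _ _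
  have hdη : (d:ℝ) * η.toReal ≤ M / 8 := by
    rw [hηval]
    have key : ∀ a b : ℝ, 0 ≤ b → 0 < a → b * (a / (8 * (b + 1))) ≤ a / 8 := by
      intro a b hb ha
      have h1 : b * (a / (8 * (b + 1))) = a * b / (8 * (b + 1)) := by ring
      rw [h1, div_le_div_iff₀ (by linarith : (0:ℝ) < 8 * (b + 1)) (by norm_num : (0:ℝ) < 8)]
      nlinarith
    exact key M (d:ℝ) (Nat.cast_nonneg d) hM
  have hfullsum : M - M / 8 - M / 8 ≤ ∑ i ∈ full, (μ (L i)).toReal := by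
    have := hfreesum
    have := hLuniv
    have := hsplit
    linarith [hdη]
  have hlow : M - M / 8 - M / 8 - 2 * ∫ x, |z x| ∂μ ≤ ∫ x, |w x| ∂μ := by
    calc M - M / 8 - M / 8 - 2 * ∫ x, |z x| ∂μ
        ≤ ∑ i ∈ full, (μ (L i)).toReal - 2 * ∑ i ∈ full, ∫ x in L i, |z x| ∂μ := by
          have h1 := hfullsum
          have h2 := hsumz
          linarith
      _ = ∑ i ∈ full, ((μ (L i)).toReal - 2 * ∫ x in L i, |z x| ∂μ) := by
          rw [Finset.sum_sub_distrib, Finset.mul_sum]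
      _ ≤ ∑ i ∈ full, ∫ x in L i, |w x| ∂μ := Finset.sum_le_sum hchain3
      _ = ∫ x in (⋃ i ∈ full, L i), |w x| ∂μ := hchain2.symm
      _ ≤ ∫ x, |w x| ∂μ := hchain1
  rw [← hMdef] at hzint hwint
  linarith [hzint, hwint, hlow, hM]

end MainThm
end
end

section
/- Let K be an infinite locally compact Hausdorff space. Then every finite convex combination of slices of the closed unit ball of C₀(K) intersects the unit sphere of C₀(K). -/
open scoped Pointwise

noncomputable section

open ZeroAtInftyContinuousMap
open scoped ZeroAtInfty

section Aux

lemma cons_disj {X : Type*} {m : ℕ} (A : Set X) (U : Fin m → Set X)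
    (h1 : ∀ j, Disjoint A (U j)) (h2 : ∀ j j', j ≠ j' → Disjoint (U j) (U j')) :
    ∀ n n', n ≠ n' → Disjoint ((Fin.cons A U : Fin (m+1) → Set X) n)
      ((Fin.cons A U : Fin (m+1) → Set X) n') := by
  intro n n'
  induction n using Fin.cases with
  | zero =>
    induction n' using Fin.cases with
    | zero => intro h; exact absurd rfl h
    | succ j => intro _; simpa using h1 j
  | succ j =>
    induction n' using Fin.cases with
    | zero => intro _; simpa using (h1 j).symm
    | succ j' => intro h; simpa using h2 j j' (fun e => h (by rw [e]))

lemma exists_disjoint_opens {K : Type*} [TopologicalSpace K] [T2Space K] [RegularSpace K]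
    (m : ℕ) : ∀ (W S : Set K), IsOpen W → S ⊆ W → S.Infinite →
    ∃ U : Fin m → Set K, (∀ n, IsOpen (U n) ∧ (U n).Nonempty ∧ U n ⊆ W) ∧
      ∀ n n', n ≠ n' → Disjoint (U n) (U n') := by
  induction m with
  | zero =>
    intro W S _ _ _
    exact ⟨Fin.elim0, fun n => n.elim0, fun n => n.elim0⟩
  | succ m ih =>
    intro W S hW hSW hS
    obtain ⟨x, hxS, y, hyS, hxy⟩ := hS.nontrivial
    have hxmem : W ∩ {y}ᶜ ∈ nhds x :=
      (hW.inter isClosed_singleton.isOpen_compl).mem_nhds ⟨hSW hxS, hxy⟩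
    obtain ⟨t, htx, htc, hts⟩ := exists_mem_nhds_isClosed_subset hxmem
    set U₀ := interior t with hU₀
    have hU₀x : x ∈ U₀ := mem_interior_iff_mem_nhds.2 htx
    have hU₀t : U₀ ⊆ t := interior_subset
    have hU₀W : U₀ ⊆ W := fun z hz => (hts (hU₀t hz)).1
    by_cases hcase : (S \ t).Infinite
    · obtain ⟨U, hU, hdisj⟩ := ih (W \ t) (S \ t) (hW.sdiff htc)
        (fun z hz => ⟨hSW hz.1, hz.2⟩) hcase
      refine ⟨Fin.cons U₀ U, ?_, ?_⟩
      · intro n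
        refine Fin.cases ?_ ?_ n
        · exact ⟨isOpen_interior, ⟨x, hU₀x⟩, hU₀W⟩
        · intro j; exact ⟨(hU j).1, (hU j).2.1, (hU j).2.2.trans Set.diff_subset⟩
      · exact cons_disj _ _
          (fun j => Set.disjoint_left.2 fun z hz hz' => ((hU j).2.2 hz').2 (hU₀t hz)) hdisj
    · have hSt : (S ∩ t).Infinite := by
        have hsub : S ⊆ (S \ t) ∪ (S ∩ t) := fun z hz => by
          by_cases hzt : z ∈ t
          · exact Or.inr ⟨hz, hzt⟩
          · exact Or.inl ⟨hz, hzt⟩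
        rcases Set.infinite_union.mp (Set.Infinite.mono hsub hS) with h | h
        · exact absurd h hcase
        · exact h
      have hymem : W \ t ∈ nhds y :=
        ((hW.sdiff htc).mem_nhds ⟨hSW hyS, fun h => (hts h).2 rfl⟩)
      obtain ⟨t', ht'y, ht'c, ht's⟩ := exists_mem_nhds_isClosed_subset hymem
      set V₀ := interior t' with hV₀
      have hV₀y : y ∈ V₀ := mem_interior_iff_mem_nhds.2 ht'y
      have hV₀t' : V₀ ⊆ t' := interior_subset
      obtain ⟨U, hU, hdisj⟩ := ih (W \ t') (S ∩ t) (hW.sdiff ht'c)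
        (fun z hz => ⟨hSW hz.1, fun h => (ht's h).2 hz.2⟩) hSt
      refine ⟨Fin.cons V₀ U, ?_, ?_⟩
      · intro n
        refine Fin.cases ?_ ?_ n
        · exact ⟨isOpen_interior, ⟨y, hV₀y⟩, fun z hz => (ht's (hV₀t' hz)).1⟩
        · intro j; exact ⟨(hU j).1, (hU j).2.1, (hU j).2.2.trans Set.diff_subset⟩
      · exact cons_disj _ _
          (fun j => Set.disjoint_left.2 fun z hz hz' => ((hU j).2.2 hz').2 (hV₀t' hz)) hdisj

variable {K : Type*} [TopologicalSpace K]

/-- Evaluation at a point as an additive monoid hom on `C₀(K, ℝ)`. -/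
def evalHom (x : K) : C₀(K, ℝ) →+ ℝ where
  toFun u := u x
  map_zero' := rfl
  map_add' _ _ := rfl

lemma c0_sum_apply {ι : Type*} (s : Finset ι) (F : ι → C₀(K, ℝ)) (x : K) :
    (∑ i ∈ s, F i) x = ∑ i ∈ s, F i x :=
  map_sum (evalHom x) F s

lemma c0_norm_le (u : C₀(K, ℝ)) {c : ℝ} (hc : 0 ≤ c) (h : ∀ z, |u z| ≤ c) : ‖u‖ ≤ c := by
  rw [← ZeroAtInftyContinuousMap.norm_toBCF_eq_norm]
  exact (BoundedContinuousFunction.norm_le hc).2 fun z => by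
    simpa [Real.norm_eq_abs] using h z

lemma c0_apply_le_norm (u : C₀(K, ℝ)) (z : K) : |u z| ≤ ‖u‖ := by
  rw [← ZeroAtInftyContinuousMap.norm_toBCF_eq_norm]
  simpa [Real.norm_eq_abs] using u.toBCF.norm_coe_le_norm z

end Aux

/-- For an infinite locally compact Hausdorff space `K`, every
finite convex combination of slices of the closed unit ball of `C₀(K)` intersects
the unit sphere of `C₀(K)`. -/
theorem ccs_meets_sphere_C0
    {K : Type*} [TopologicalSpace K] [LocallyCompactSpace K] [T2Space K]
    [Infinite K] :
    PropP3 C₀(K, ℝ) := by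
  intro C hC
  obtain ⟨n, f, α, lam, hn, hf, hα, hlam, hsum, rfl⟩ := hC
  -- choose elements of the slices
  have hgex : ∀ i, ∃ g : C₀(K, ℝ), ‖g‖ ≤ 1 ∧ 1 - α i < f i g := by
    intro i
    have h1 : (1 : ℝ) - α i < ‖f i‖ := by rw [hf i]; linarith [hα i]
    obtain ⟨x, hx1, hx2⟩ := (f i).exists_lt_apply_of_lt_opNorm h1
    rw [Real.norm_eq_abs] at hx2
    rcases le_or_gt 0 (f i x) with hfx | hfx
    · exact ⟨x, hx1.le, by rwa [abs_of_nonneg hfx] at hx2⟩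
    · refine ⟨-x, by simpa using hx1.le, ?_⟩
      rw [map_neg]
      rwa [abs_of_neg hfx] at hx2
  choose g hg1 hg2 using hgex
  set ε : Fin n → ℝ := fun i => f i (g i) - (1 - α i) with hεdef
  have hεpos : ∀ i, 0 < ε i := fun i => by simp only [hεdef]; linarith [hg2 i]
  set N : Fin n → ℕ := fun i => ⌈2 / ε i⌉₊ + 1 with hNdef
  set m : ℕ := ∑ i, N i with hmdef
  -- disjoint nonempty opens and bumps
  obtain ⟨U, hU, hdisj⟩ := exists_disjoint_opens (K := K) m Set.univ Set.univ isOpen_univ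
    (subset_refl _) Set.infinite_univ
  have hbump : ∀ k : Fin m, ∃ (φ : C(K, ℝ)) (x : K), x ∈ U k ∧ φ x = 1 ∧
      (∀ z, z ∉ U k → φ z = 0) ∧ HasCompactSupport ⇑φ ∧ ∀ z, φ z ∈ Set.Icc (0 : ℝ) 1 := by
    intro k
    obtain ⟨x, hx⟩ := (hU k).2.1
    obtain ⟨φ, hφ1, hφ0, hφc, hφi⟩ := exists_continuous_one_zero_of_isCompact
      (isCompact_singleton (x := x)) (hU k).1.isClosed_compl
      (Set.disjoint_singleton_left.2 (fun h => h hx))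
    exact ⟨φ, x, hx, hφ1 rfl, fun z hz => hφ0 hz, hφc, hφi⟩
  choose φ xx hxU hφ1 hφ0 hφc hφi using hbump
  set Φ : Fin m → C₀(K, ℝ) := fun k => ⟨φ k, (hφc k).is_zero_at_infty⟩ with hΦdef
  have hΦapp : ∀ k z, Φ k z = φ k z := fun k z => rfl
  set ψ : Fin n → Fin m → C₀(K, ℝ) := fun i k => Φ k - Φ k * g i with hψdef
  have habs : ∀ i z, |g i z| ≤ 1 := fun i z => (c0_apply_le_norm (g i) z).trans (hg1 i)
  have hψval : ∀ i k z, ψ i k z = φ k z * (1 - g i z) := by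
    intro i k z
    simp only [hψdef, ZeroAtInftyContinuousMap.coe_sub, ZeroAtInftyContinuousMap.coe_mul,
      Pi.sub_apply, Pi.mul_apply, hΦapp]
    ring
  have hψzero : ∀ i k z, z ∉ U k → ψ i k z = 0 := by
    intro i k z hz; rw [hψval, hφ0 k z hz, zero_mul]
  have hψbd : ∀ i k z, |ψ i k z| ≤ 2 := by
    intro i k z
    rw [hψval]
    rw [abs_mul]
    have h1 : |φ k z| ≤ 1 := abs_le.2 ⟨by linarith [(hφi k z).1], (hφi k z).2⟩
    have h2 : |1 - g i z| ≤ 2 := by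
      have := abs_le.1 (habs i z); rw [abs_le]; constructor <;> linarith [this.1, this.2]
    calc |φ k z| * |1 - g i z| ≤ 1 * 2 :=
          mul_le_mul h1 h2 (abs_nonneg _) zero_le_one
      _ = 2 := by norm_num
  -- bad sets are small
  classical
  set bad : Fin n → Finset (Fin m) :=
    fun i => Finset.univ.filter (fun k => ε i ≤ |f i (ψ i k)|) with hbaddef
  have hbadcard : ∀ i, ((bad i).card : ℝ) * ε i ≤ 2 := by
    intro i
    set s : Fin m → ℝ := fun k => if 0 ≤ f i (ψ i k) then 1 else -1 with hsdef
    set w : C₀(K, ℝ) := ∑ k ∈ bad i, s k • ψ i k with hwdef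
    have hwz : ∀ z, |w z| ≤ 2 := by
      intro z
      have hterm : ∀ k, (s k • ψ i k) z = s k * ψ i k z := fun k => rfl
      rw [hwdef, c0_sum_apply]
      by_cases hz : ∃ k₁ ∈ bad i, z ∈ U k₁
      · obtain ⟨k₁, hk₁T, hk₁z⟩ := hz
        rw [Finset.sum_eq_single_of_mem k₁ hk₁T (fun b _ hbne => by
          rw [hterm, hψzero i b z (Set.disjoint_right.1 (hdisj b k₁ hbne) hk₁z), mul_zero])]
        rw [hterm, abs_mul]
        have hs1 : |s k₁| = 1 := by
          simp only [hsdef]; split <;> simp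
        rw [hs1, one_mul]; exact hψbd i k₁ z
      · push_neg at hz
        rw [Finset.sum_eq_zero fun k hk => by
          rw [hterm, hψzero i k z (hz k hk), mul_zero]]
        norm_num
    have hwnorm : ‖w‖ ≤ 2 := c0_norm_le w (by norm_num) hwz
    have hfw : f i w = ∑ k ∈ bad i, |f i (ψ i k)| := by
      rw [hwdef, map_sum]
      refine Finset.sum_congr rfl fun k _ => ?_
      rw [map_smul, smul_eq_mul]
      by_cases hfs : 0 ≤ f i (ψ i k)
      · simp only [hsdef, if_pos hfs]
        rw [one_mul, abs_of_nonneg hfs]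
      · simp only [hsdef, if_neg hfs]
        rw [neg_one_mul, abs_of_neg (not_le.1 hfs)]
    calc ((bad i).card : ℝ) * ε i = (bad i).card • ε i := by rw [nsmul_eq_mul]
      _ ≤ ∑ k ∈ bad i, |f i (ψ i k)| := Finset.card_nsmul_le_sum _ _ _
          (fun k hk => (Finset.mem_filter.1 hk).2)
      _ = f i w := hfw.symm
      _ ≤ |f i w| := le_abs_self _
      _ ≤ ‖f i‖ * ‖w‖ := by
          simpa [Real.norm_eq_abs] using (f i).le_opNorm w
      _ ≤ 1 * 2 := by rw [hf i]; linarith [hwnorm]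
      _ = 2 := by norm_num
  have hbadlt : ∀ i, (bad i).card < N i := by
    intro i
    by_contra hcon
    push_neg at hcon
    have h1 : (N i : ℝ) * ε i ≤ 2 := le_trans
      (mul_le_mul_of_nonneg_right (by exact_mod_cast hcon) (hεpos i).le) (hbadcard i)
    have h2 : 2 / ε i ≤ (⌈2 / ε i⌉₊ : ℝ) := Nat.le_ceil _
    have h3 : (N i : ℝ) = (⌈2 / ε i⌉₊ : ℝ) + 1 := by simp [hNdef]
    have h4 : 2 < (N i : ℝ) * ε i := by
      have h5 : (2 / ε i) * ε i = 2 := div_mul_cancel₀ 2 (hεpos i).ne'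
      have h6 : (2 / ε i) * ε i ≤ (⌈2 / ε i⌉₊ : ℝ) * ε i :=
        mul_le_mul_of_nonneg_right h2 (hεpos i).le
      rw [h3]
      nlinarith [hεpos i]
    linarith
  -- find a good bump index
  have hcard : (Finset.univ.biUnion bad).card < m := by
    calc (Finset.univ.biUnion bad).card ≤ ∑ i, (bad i).card := Finset.card_biUnion_le
      _ < ∑ i, N i := Finset.sum_lt_sum_of_nonempty
          (Finset.univ_nonempty_iff.2 (Fin.pos_iff_nonempty.1 hn)) fun i _ => hbadlt i
      _ = m := hmdef.symm
  obtain ⟨k₀, hk₀⟩ : ∃ k₀ : Fin m, k₀ ∉ Finset.univ.biUnion bad := by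
    by_contra hcon
    push_neg at hcon
    have : (Finset.univ : Finset (Fin m)) ⊆ Finset.univ.biUnion bad := fun k _ => hcon k
    have := Finset.card_le_card this
    simp only [Finset.card_univ, Fintype.card_fin] at this
    omega
  have hgood : ∀ i, |f i (ψ i k₀)| < ε i := by
    intro i
    by_contra hcon
    push_neg at hcon
    exact hk₀ (Finset.mem_biUnion.2 ⟨i, Finset.mem_univ i,
      Finset.mem_filter.2 ⟨Finset.mem_univ k₀, hcon⟩⟩)
  -- the perturbed slice elements
  set h : Fin n → C₀(K, ℝ) := fun i => g i + ψ i k₀ with hhdef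
  have hhval : ∀ i z, h i z = g i z + φ k₀ z * (1 - g i z) := by
    intro i z
    simp only [hhdef, ZeroAtInftyContinuousMap.coe_add, Pi.add_apply, hψval]
  have hh1 : ∀ i z, |h i z| ≤ 1 := by
    intro i z
    rw [hhval]
    have hp := hφi k₀ z
    have hg := abs_le.1 (habs i z)
    have : g i z + φ k₀ z * (1 - g i z) = (1 - φ k₀ z) * g i z + φ k₀ z := by ring
    rw [this, abs_le]
    obtain ⟨hp1, hp2⟩ := hp
    constructor
    · have key : (0:ℝ) ≤ (1 - φ k₀ z) * (1 + g i z) :=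
        mul_nonneg (by linarith) (by linarith [hg.1])
      have key2 : (1 - φ k₀ z) * (1 + g i z)
          = 1 + g i z - φ k₀ z - φ k₀ z * g i z := by ring
      have goal2 : (1 - φ k₀ z) * g i z + φ k₀ z
          = g i z - φ k₀ z * g i z + φ k₀ z := by ring
      rw [goal2]
      rw [key2] at key
      linarith
    · have key : (0:ℝ) ≤ (1 - φ k₀ z) * (1 - g i z) :=
        mul_nonneg (by linarith) (by linarith [hg.2])
      have key2 : (1 - φ k₀ z) * (1 - g i z)
          = 1 - g i z - φ k₀ z + φ k₀ z * g i z := by ring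
      have goal2 : (1 - φ k₀ z) * g i z + φ k₀ z
          = g i z - φ k₀ z * g i z + φ k₀ z := by ring
      rw [goal2]
      rw [key2] at key
      linarith
  have hhn : ∀ i, ‖h i‖ ≤ 1 := fun i => c0_norm_le (h i) zero_le_one (hh1 i)
  have hslice : ∀ i, h i ∈ ballSlice C₀(K, ℝ) (f i) (α i) := by
    intro i
    constructor
    · rw [Metric.mem_closedBall, dist_zero_right]; exact hhn i
    · have h1 : f i (h i) = f i (g i) + f i (ψ i k₀) := by rw [hhdef]; exact map_add _ _ _
      have h2 : -(ε i) < f i (ψ i k₀) := neg_lt_of_abs_lt (hgood i)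
      simp only [Set.mem_setOf_eq, h1]
      simp only [hεdef] at h2
      linarith
  have hone : ∀ i, h i (xx k₀) = 1 := by
    intro i
    rw [hhval, hφ1]
    ring
  refine ⟨∑ i, lam i • h i, ?_, ?_⟩
  · exact (Set.mem_fintype_sum _ _).2
      ⟨fun i => lam i • h i, fun i => Set.smul_mem_smul_set (hslice i), rfl⟩
  · have hle : ‖∑ i, lam i • h i‖ ≤ 1 := by
      calc ‖∑ i, lam i • h i‖ ≤ ∑ i, ‖lam i • h i‖ := norm_sum_le _ _
        _ ≤ ∑ i, lam i := Finset.sum_le_sum fun i _ => c0_norm_le _ (hlam i) fun z => by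
            have hsm : (lam i • h i) z = lam i * h i z := rfl
            rw [hsm, abs_mul, abs_of_nonneg (hlam i)]
            calc lam i * |h i z| ≤ lam i * 1 :=
                mul_le_mul_of_nonneg_left (hh1 i z) (hlam i)
              _ = lam i := mul_one _
        _ = 1 := hsum
    have heval : (∑ i, lam i • h i) (xx k₀) = 1 := by
      rw [c0_sum_apply]
      calc ∑ i, (lam i • h i) (xx k₀) = ∑ i, lam i * h i (xx k₀) :=
            Finset.sum_congr rfl fun i _ => rfl
        _ = ∑ i, lam i := Finset.sum_congr rfl fun i _ => by rw [hone, mul_one]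
        _ = 1 := hsum
    have hge : (1 : ℝ) ≤ ‖∑ i, lam i • h i‖ := by
      have := c0_apply_le_norm (∑ i, lam i • h i) (xx k₀)
      rw [heval] at this
      simpa using this
    linarith
end
end
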